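/- arXiv:2109.12908 — 10 statements merged into one kernel-verified Lean document; each statement's English description precedes it below -/
import Mathlib

section
/- Let w ∈ S_n, a = w(1), and b ∈ [n] with b ≠ a and a < b. Let p be an integer with 0 ≤ p < w⁻¹(b) - 1, and consider the sequence of transpositions Γ(1,p) = ((1,p+2),(1,p+3),…,(1,n)) acting on positions. Then the sum over all subsets T = {(1,k₁),…,(1,kₛ)} of Γ(1,p) (taken in order) such that the chain w < w(1,k₁) < w(1,k₁)(1,k₂) < … is increasing in Bruhat order and the final permutation wT satisfies wT(1) = b, of t^{N(w,T)}·(1-t)^{|T|}, equals t^{N_{a,b}(w[2,p+1])}·(1-t), where N_{a,b}(w[2,p+1]) is the number of indices 2 ≤ i ≤ p+1 with a < w(i) < b, and N(w,T) = Σᵢ N_{cᵢ,dᵢ}(wᵢ[aᵢ,bᵢ]) with wᵢ = w(a₁,b₁)⋯(aᵢ,bᵢ), cᵢ = min(wᵢ(aᵢ),wᵢ(bᵢ)), dᵢ = max(wᵢ(aᵢ),wᵢ(bᵢ)). -/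
/-!
Split the sum according to whether `(1, p+2)` is used. The subsets avoiding it give, by induction
on `w⁻¹(b) - p`, the term `t^{N_{a,b}(w[2,p+2])} (1-t)`. Using it moves `c = w(p+2)` to position 1;
this step increases length iff `a < c`, and since the value at position 1 increases along a
Bruhat-increasing chain, nothing reaches `b` unless `c < b`. In that case induction applied to
`w (1, p+2)` gives `t^{N_{a,c} + N_{c,b}} (1-t)^2`, and the two parts add up by
`N_{a,b}(w[2,p+2]) = N_{a,c}(w[2,p+1]) + N_{c,b}(w[2,p+1]) + 1` and `t(1-t) + (1-t)^2 = 1-t`.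
When `p + 2 = w⁻¹(b)` only `T = ((1, p+2))` contributes, because the value finally at position 1
is that of `w` at the last position used.
-/

open Polynomial

/-- Coxeter length of `w` viewed as a permutation of `[n] = {1,…,n}`:
the number of inversions. -/
noncomputable def ell (n : ℕ) (w : Equiv.Perm ℕ) : ℕ :=
  Set.ncard {p : ℕ × ℕ | p.1 ∈ Finset.Icc 1 n ∧ p.2 ∈ Finset.Icc 1 n ∧
    p.1 < p.2 ∧ w p.2 < w p.1}

/-- Successively multiply `w` on the right by the transpositions in the list `T`. -/
def applyT (w : Equiv.Perm ℕ) : List (ℕ × ℕ) → Equiv.Perm ℕ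
  | [] => w
  | t :: rest => applyT (w * Equiv.swap t.1 t.2) rest

/-- Bruhat-increasing chain condition: consecutive elements differ by a
reflection, so Bruhat increase is equivalent to length increase at each step. -/
def BruhatInc (n : ℕ) (w : Equiv.Perm ℕ) : List (ℕ × ℕ) → Prop
  | [] => True
  | t :: rest => ell n w < ell n (w * Equiv.swap t.1 t.2) ∧
      BruhatInc n (w * Equiv.swap t.1 t.2) rest

/-- `N_{a,b}(s)`: the number of entries of the sequence `s` strictly between `a` and `b`. -/
def Nab (a b : ℕ) (s : List ℕ) : ℕ := s.countP (fun x => decide (a < x ∧ x < b))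

/-- The statistic `N(w,T) = Σᵢ N_{cᵢ,dᵢ}(wᵢ[aᵢ,bᵢ])`, where
`wᵢ = w(a₁,b₁)⋯(aᵢ,bᵢ)`, `cᵢ = min(wᵢ(aᵢ),wᵢ(bᵢ))`, `dᵢ = max(wᵢ(aᵢ),wᵢ(bᵢ))`,
and `wᵢ[aᵢ,bᵢ]` is the window of values of `wᵢ` at positions `aᵢ,…,bᵢ`. -/
def Nstat : Equiv.Perm ℕ → List (ℕ × ℕ) → ℕ
  | _, [] => 0
  | w, t :: rest =>
    let w' := w * Equiv.swap t.1 t.2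
    Nab (min (w' t.1) (w' t.2)) (max (w' t.1) (w' t.2))
        ((List.range' t.1 (t.2 + 1 - t.1)).map w') + Nstat w' rest

/-- The list of transpositions `(1,k₁),(1,k₂),…` for `K = {k₁ < k₂ < …}`,
taken in increasing order. -/
def TL (K : Finset ℕ) : List (ℕ × ℕ) :=
  (K.sort (· ≤ ·)).map (fun k => ((1 : ℕ), k))

open Equiv Finset

def inversions (n : ℕ) (w : Perm ℕ) : Set (ℕ × ℕ) :=
  {p : ℕ × ℕ | p.1 ∈ Icc 1 n ∧ p.2 ∈ Icc 1 n ∧ p.1 < p.2 ∧ w p.2 < w p.1}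

lemma inversions_finite (n : ℕ) (w : Perm ℕ) : (inversions n w).Finite :=
  (Icc 1 n ×ˢ Icc 1 n).finite_toSet.subset fun _ hq => by
    simpa only [coe_product, Set.mem_prod, mem_coe] using And.intro hq.1 hq.2.1

/- Relabelling positions through `(i j)` sends the inversions of `w` injectively to inversions
of `w (i j)` other than `(i, j)`; the pairs it would reverse, `(i, y)` and `(x, j)` with
`i < x, y < j`, are kept as they are, and remain inversions because `w i < w j`. -/
def swapRelabel (τ : Perm ℕ) (q : ℕ × ℕ) : ℕ × ℕ :=
  if τ q.1 < τ q.2 then (τ q.1, τ q.2) else q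

lemma swapRelabel_injOn {i j : ℕ} :
    Set.InjOn (swapRelabel (swap i j)) {q | q.1 < q.2} := by
  rintro ⟨x₁, y₁⟩ (h₁ : x₁ < y₁) ⟨x₂, y₂⟩ (h₂ : x₂ < y₂) he
  simp only [swapRelabel] at he
  split_ifs at he with c₁ c₂ c₂ <;> simp only [Prod.mk.injEq] at he
  · simp [(swap i j).injective he.1, (swap i j).injective he.2]
  · rw [← he.1, ← he.2, swap_apply_self, swap_apply_self] at c₂
    exact absurd h₁ c₂
  · rw [he.1, he.2, swap_apply_self, swap_apply_self] at c₁
    exact absurd h₂ c₁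
  · simp [he]

lemma swapRelabel_mem_inversions {n i j : ℕ} {w : Perm ℕ} (hi : i ∈ Icc 1 n)
    (hj : j ∈ Icc 1 n) (hij : i < j) (h : w i < w j) {q : ℕ × ℕ} (hq : q ∈ inversions n w) :
    swapRelabel (swap i j) q ∈ inversions n (w * swap i j) \ {(i, j)} := by
  obtain ⟨x, y⟩ := q
  obtain ⟨hx, hy, hxy, hw⟩ := hq
  simp only [mem_Icc] at hi hj hx hy
  simp only [swapRelabel, inversions, Set.mem_sdiff, Set.mem_ofPred_eq, Set.mem_singleton_iff,
    mem_Icc, Perm.mul_apply, swap_apply_def] at hw ⊢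
  split_ifs <;> subst_vars <;> simp only [Prod.mk.injEq] <;> omega

lemma ell_lt_ell_mul_swap {n i j : ℕ} {w : Perm ℕ} (hi : i ∈ Icc 1 n) (hj : j ∈ Icc 1 n)
    (hij : i < j) (h : w i < w j) : ell n w < ell n (w * swap i j) := by
  have hij_mem : (i, j) ∈ inversions n (w * swap i j) :=
    ⟨hi, hj, hij, by simpa [Perm.mul_apply] using h⟩
  calc ell n w ≤ (inversions n (w * swap i j) \ {(i, j)}).ncard :=
        Set.ncard_le_ncard_of_injOn _
          (fun q hq => swapRelabel_mem_inversions hi hj hij h hq)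
          (swapRelabel_injOn.mono fun q hq => hq.2.2.1) ((inversions_finite _ _).sdiff)
    _ < ell n (w * swap i j) :=
        Set.ncard_sdiff_singleton_lt_of_mem hij_mem (inversions_finite _ _)

lemma ell_lt_ell_mul_swap_iff {n i j : ℕ} {w : Perm ℕ} (hi : i ∈ Icc 1 n) (hj : j ∈ Icc 1 n)
    (hij : i < j) : ell n w < ell n (w * swap i j) ↔ w i < w j := by
  refine ⟨fun hlt => ?_, ell_lt_ell_mul_swap hi hj hij⟩
  by_contra! hle
  have hback := ell_lt_ell_mul_swap (w := w * swap i j) hi hj hij (by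
    simpa [Perm.mul_apply] using hle.lt_of_ne (w.injective.ne hij.ne'))
  rw [mul_assoc, swap_mul_self, mul_one] at hback
  exact hlt.asymm hback

lemma TL_empty : TL ∅ = [] := by simp [TL]

lemma TL_insert_of_forall_lt {m : ℕ} {K : Finset ℕ} (h : ∀ k ∈ K, m < k) :
    TL (insert m K) = (1, m) :: TL K := by
  rw [TL, sort_insert _ (fun k hk => (h k hk).le) fun hm => lt_irrefl m (h m hm)]
  rfl

lemma applyT_TL_apply_one (w : Perm ℕ) {K : Finset ℕ} (hK : ∀ k ∈ K, 1 ≤ k) :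
    applyT w (TL K) 1 = w (max 1 (K.sup id)) := by
  induction K using Finset.induction_on_min generalizing w with
  | empty => simp [TL_empty, applyT]
  | insert a s has ih =>
    rw [TL_insert_of_forall_lt has, applyT, ih _ fun k hk => hK k (mem_insert_of_mem hk),
      sup_insert, id]
    have ha : 1 ≤ a := hK a (mem_insert_self a s)
    rcases s.eq_empty_or_nonempty with rfl | ⟨x, hx⟩
    · simp [Perm.mul_apply, max_eq_right ha]
    · have hsup : a < s.sup id := (has x hx).trans_le (le_sup (f := id) hx)
      rw [max_eq_right hsup.le, max_eq_right (by omega : 1 ≤ s.sup id), Perm.mul_apply,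
        swap_apply_of_ne_of_ne (by omega) (by omega)]

lemma apply_one_le_applyT_TL_apply_one {n : ℕ} {w : Perm ℕ} {K : Finset ℕ} (hK : K ⊆ Icc 2 n)
    (hw : BruhatInc n w (TL K)) : w 1 ≤ applyT w (TL K) 1 := by
  induction K using Finset.induction_on_min generalizing w with
  | empty => simp [TL_empty, applyT]
  | insert a s has ih =>
    rw [TL_insert_of_forall_lt has] at hw ⊢
    have ha := mem_Icc.mp (hK (mem_insert_self a s))
    have hstep : w 1 < w a := (ell_lt_ell_mul_swap_iff (mem_Icc.mpr ⟨le_rfl, by omega⟩)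
      (mem_Icc.mpr ⟨by omega, ha.2⟩) (by omega)).mp hw.1
    have hrest := ih ((subset_insert a s).trans hK) hw.2
    rw [Perm.mul_apply, swap_apply_left] at hrest
    exact hstep.le.trans hrest

lemma Nab_append_singleton (a b x : ℕ) (l : List ℕ) :
    Nab a b (l ++ [x]) = Nab a b l + if a < x ∧ x < b then 1 else 0 := by
  simp [Nab, List.countP_append]

lemma Nab_eq_add_of_notMem {a b c : ℕ} (hac : a < c) (hcb : c < b) {l : List ℕ} (hc : c ∉ l) :
    Nab a b l = Nab a c l + Nab c b l := by
  induction l with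
  | nil => rfl
  | cons x l ih =>
    rw [List.mem_cons, not_or] at hc
    simp only [Nab, List.countP_cons, decide_eq_true_eq] at ih ⊢
    rw [ih hc.2]
    split_ifs <;> omega

lemma map_range'_two_succ (w : Perm ℕ) (p : ℕ) :
    (List.range' 2 (p + 1)).map w = (List.range' 2 p).map w ++ [w (p + 2)] := by
  rw [List.range'_concat, List.map_append, List.map_singleton, show 2 + 1 * p = p + 2 by omega]

lemma map_range'_two_mul_swap_one (w : Perm ℕ) (p : ℕ) :
    (List.range' 2 (p + 1)).map (w * swap 1 (p + 2)) = (List.range' 2 p).map w ++ [w 1] := by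
  rw [map_range'_two_succ, Perm.mul_apply, swap_apply_right]
  congr 1
  refine List.map_congr_left fun x hx => ?_
  rw [List.mem_range'_1] at hx
  rw [Perm.mul_apply, swap_apply_of_ne_of_ne (by omega) (by omega)]

lemma map_range'_one_mul_swap_one (w : Perm ℕ) (p : ℕ) :
    (List.range' 1 (p + 2)).map (w * swap 1 (p + 2)) =
      w (p + 2) :: ((List.range' 2 p).map w ++ [w 1]) := by
  rw [List.range'_succ, List.map_cons, map_range'_two_mul_swap_one, Perm.mul_apply,
    swap_apply_left]

section InsertFirst

variable {n p : ℕ} {w : Perm ℕ} {K : Finset ℕ}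

lemma bruhatInc_TL_insert (hpn : p + 2 ≤ n) (hK : ∀ k ∈ K, p + 2 < k) :
    BruhatInc n w (TL (insert (p + 2) K)) ↔
      w 1 < w (p + 2) ∧ BruhatInc n (w * swap 1 (p + 2)) (TL K) := by
  rw [TL_insert_of_forall_lt hK, BruhatInc,
    ell_lt_ell_mul_swap_iff (mem_Icc.mpr ⟨le_rfl, by omega⟩) (mem_Icc.mpr ⟨by omega, hpn⟩)
      (by omega)]

lemma Nstat_TL_insert (hK : ∀ k ∈ K, p + 2 < k) (h : w 1 < w (p + 2)) :
    Nstat w (TL (insert (p + 2) K)) =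
      Nab (w 1) (w (p + 2)) ((List.range' 2 p).map w) + Nstat (w * swap 1 (p + 2)) (TL K) := by
  rw [TL_insert_of_forall_lt hK, Nstat]
  simp only [Nat.add_sub_cancel, map_range'_one_mul_swap_one, Perm.mul_apply, swap_apply_left,
    swap_apply_right, min_eq_right h.le, max_eq_left h.le]
  simp [Nab, List.countP_append]

end InsertFirst

open scoped Classical in
noncomputable def chainSum (n : ℕ) (w : Perm ℕ) (b m : ℕ) : ℤ[X] :=
  ∑ K ∈ (Icc m n).powerset.filter (fun K => BruhatInc n w (TL K) ∧ applyT w (TL K) 1 = b),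
    (X : ℤ[X]) ^ Nstat w (TL K) * (1 - X) ^ K.card

section ChainSum

variable {n b : ℕ} {w : Perm ℕ}

lemma chainSum_step {p : ℕ} (hpn : p + 2 ≤ n) :
    chainSum n w b (p + 2) = chainSum n w b (p + 3) +
      if w 1 < w (p + 2) then
        X ^ Nab (w 1) (w (p + 2)) ((List.range' 2 p).map w) * (1 - X) *
          chainSum n (w * swap 1 (p + 2)) b (p + 3)
      else 0 := by
  classical
  have hK : ∀ K ∈ (Icc (p + 3) n).powerset, ∀ k ∈ K, p + 2 < k := fun K hK k hk =>
    (mem_Icc.mp (mem_powerset.mp hK hk)).1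
  rw [chainSum, ← insert_Icc_add_one_left_eq_Icc hpn, sum_filter,
    sum_powerset_insert (by simp), ← sum_filter]
  congr 1
  split_ifs with h
  · rw [chainSum, mul_sum, sum_filter]
    refine sum_congr rfl fun K hK' => ?_
    rw [bruhatInc_TL_insert hpn (hK K hK'), TL_insert_of_forall_lt (hK K hK'), applyT,
      ← TL_insert_of_forall_lt (hK K hK'), Nstat_TL_insert (hK K hK') h,
      card_insert_of_notMem fun hp => lt_irrefl _ (hK K hK' _ hp)]
    simp only [h, true_and]
    split_ifs
    · ring
    · rfl
  · refine sum_eq_zero fun K hK' => if_neg ?_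
    rw [bruhatInc_TL_insert hpn (hK K hK')]
    tauto

lemma chainSum_of_apply_eq_of_lt {j m : ℕ} (hm : 1 ≤ m) (hj : w j = b) (hjm : j < m) :
    chainSum n w b m = if w 1 = b then 1 else 0 := by
  rw [chainSum, sum_filter, sum_eq_single ∅]
  · simp [TL_empty, BruhatInc, applyT, Nstat]
  · intro K hK hne
    have hKm : ∀ k ∈ K, m ≤ k := fun k hk => (mem_Icc.mp (mem_powerset.mp hK hk)).1
    obtain ⟨x, hx⟩ := nonempty_iff_ne_empty.mpr hne
    refine if_neg ?_
    rintro ⟨-, hend⟩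
    rw [applyT_TL_apply_one w fun k hk => hm.trans (hKm k hk), ← hj] at hend
    replace hend := w.injective hend
    have := (hKm x hx).trans (le_sup (f := id) hx)
    omega
  · exact fun h => absurd (empty_mem_powerset _) h

lemma chainSum_eq_zero_of_lt_apply_one {m : ℕ} (hm : 2 ≤ m) (hb : b < w 1) :
    chainSum n w b m = 0 := by
  classical
  refine sum_eq_zero fun K hK => ?_
  obtain ⟨hK, hinc, hend⟩ := mem_filter.mp hK
  have hK2 : K ⊆ Icc 2 n := (mem_powerset.mp hK).trans (Icc_subset_Icc_left hm)
  have := apply_one_le_applyT_TL_apply_one hK2 hinc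
  omega

end ChainSum

lemma chainSum_eq_of_apply_one_lt {n b j p : ℕ} {w : Perm ℕ} (hb : w 1 < b) (hj : w j = b)
    (hpj : p + 2 ≤ j) (hjn : j ≤ n) :
    chainSum n w b (p + 2) = X ^ Nab (w 1) b ((List.range' 2 p).map w) * (1 - X) := by
  have hw' : (w * swap 1 (p + 2)) 1 = w (p + 2) := by rw [Perm.mul_apply, swap_apply_left]
  rw [chainSum_step (hpj.trans hjn)]
  rcases hpj.eq_or_lt with rfl | hpj
  · rw [chainSum_of_apply_eq_of_lt (by omega) hj (by omega), if_neg hb.ne, if_pos (hj ▸ hb), hj,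
      chainSum_of_apply_eq_of_lt (by omega) (hw'.trans hj) (by omega), if_pos (hw'.trans hj)]
    ring
  have ih : chainSum n w b (p + 3) = X ^ Nab (w 1) b ((List.range' 2 (p + 1)).map w) * (1 - X) :=
    chainSum_eq_of_apply_one_lt (p := p + 1) hb hj hpj hjn
  rw [ih, map_range'_two_succ, Nab_append_singleton]
  set c := w (p + 2)
  have hca : c ≠ w 1 := w.injective.ne (by omega)
  have hcb : c ≠ b := hj ▸ w.injective.ne (by omega)
  rcases lt_or_gt_of_ne hca with hca | hac
  · rw [if_neg (by omega), if_neg hca.not_gt]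
    ring
  rw [if_pos hac]
  rcases lt_or_gt_of_ne hcb with hcb | hbc
  · have hj' : (w * swap 1 (p + 2)) j = b := by
      rw [Perm.mul_apply, swap_apply_of_ne_of_ne (by omega) (by omega), hj]
    have ih' : chainSum n (w * swap 1 (p + 2)) b (p + 3) = _ :=
      chainSum_eq_of_apply_one_lt (p := p + 1) (by rwa [hw']) hj' hpj hjn
    have hcL : c ∉ (List.range' 2 p).map w := fun hc => by
      obtain ⟨x, hx, hxc⟩ := List.mem_map.mp hc
      have := w.injective hxc
      rw [List.mem_range'_1] at hx
      omega
    rw [ih', hw', map_range'_two_mul_swap_one, Nab_append_singleton, if_pos ⟨hac, hcb⟩,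
      if_neg (by omega), Nab_eq_add_of_notMem hac hcb hcL]
    ring
  · rw [chainSum_eq_zero_of_lt_apply_one (by omega) (by rwa [hw']), if_neg (by omega)]
    ring
termination_by j - p

open scoped Classical in
/-- `Γ(1,p)` is encoded by the subsets `K ⊆ {p+2,…,n}`, taken in increasing order, and `w[2,p+1]`
by the window `(List.range' 2 p).map w`. -/
theorem single_entry_compression_general (n : ℕ) (w : Equiv.Perm ℕ)
    (hw : ∀ x, x ∉ Finset.Icc 1 n → w x = x)
    (b : ℕ) (hb : b ∈ Finset.Icc 1 n) (hab : w 1 < b)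
    (p : ℕ) (hp : p + 1 < w.symm b) :
    ∑ K ∈ (Finset.Icc (p + 2) n).powerset.filter
        (fun K => BruhatInc n w (TL K) ∧ applyT w (TL K) 1 = b),
      (X : Polynomial ℤ) ^ Nstat w (TL K) * (1 - X) ^ K.card
    = X ^ Nab (w 1) b ((List.range' 2 p).map w) * (1 - X) := by
  have hjn : w.symm b ≤ n := by
    by_contra! h
    have hfix := hw (w.symm b) (by rw [mem_Icc]; omega)
    rw [apply_symm_apply] at hfix
    rw [mem_Icc] at hb
    omega
  exact chainSum_eq_of_apply_one_lt hab (w.apply_symm_apply b) (by omega) hjn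

open scoped Classical in
/-- Proposition 3.1: single-entry compression for the alcove formula.
Here `Γ(1,p) = ((1,p+2),…,(1,n))`, the sum is over subsets `K` of `{p+2,…,n}`
(taken in increasing order) for which the chain is Bruhat-increasing and
`wT(1) = b`, and `w[2,p+1]` is the window of values of `w` at positions `2,…,p+1`. -/
theorem single_entry_compression (n : ℕ) (w : Equiv.Perm ℕ)
    (hw : ∀ x, x ∉ Finset.Icc 1 n → w x = x)
    (b : ℕ) (hb : b ∈ Finset.Icc 1 n) (hba : b ≠ w 1) (hab : w 1 < b)
    (p : ℕ) (hp : p + 1 < w.symm b) :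
    ∑ K ∈ (Finset.Icc (p + 2) n).powerset.filter
        (fun K => BruhatInc n w (TL K) ∧ applyT w (TL K) 1 = b),
      (X : Polynomial ℤ) ^ Nstat w (TL K) * (1 - X) ^ K.card
    = X ^ Nab (w 1) b ((List.range' 2 p).map w) * (1 - X) :=
  single_entry_compression_general n w hw b hb hab p hp
end

section
/- Let C' be a column (strictly increasing is not assumed; it is a sequence with entries in [n]) of length c', and let S = {a₁ > a₂ > … > a_c} be a set of size c = c' or c'+1 such that the sorted increasing arrangements of S and C' placed side by side form weakly increasing rows. Define the root column Ĉ by placing entries of S from largest to smallest: each entry equal to some entry of C' is placed in the same row as that entry of C'; each entry not appearing in C' is placed next to the largest remaining entry of C' with an empty left box (or at the bottom if c = c'+1). Then the two-column configuration ĈC' is an HHL filling: it is weakly increasing in rows, has distinct entries in each column, and has no attacking pairs. -/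
/-! Columns have distinct entries by assumption, and a common entry sits in the row of its
partner in `C'`, so it cannot attack. Rows are weakly increasing by counting: suppose
`y = C' i < Croot i` in row `i`. Every row whose root entry is `≤ y` is above the bottom row
and has its right entry `< y` (a common entry is its own right neighbour; a new entry is
`< Croot i`, and new entries are paired with `C'` in relative order). So `S` has at most as
many entries `≤ y` as `C'` has entries `< y`. If `y` has position `k` (from `0`) in the
sorted `C'`, the latter number is `k`, whereas the sorted-rows hypothesis puts the entry of
`S` at position `k` below `y`, so `S` has at least `k + 1` entries `≤ y`. -/

/-- A two-column configuration with left column `C` (length `c`) and right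
column `C'` (length `c'`) is an HHL filling: distinct entries in each column,
no attacking pairs between the columns (a left cell strictly below a right cell
may not share its entry), and weakly increasing rows. -/
def HHL2 (c c' : ℕ) (C : Fin c → ℕ) (C' : Fin c' → ℕ) : Prop :=
  Function.Injective C ∧ Function.Injective C' ∧
  (∀ (i : Fin c) (k : Fin c'), (k : ℕ) < (i : ℕ) → C i ≠ C' k) ∧
  (∀ (i : Fin c) (h : (i : ℕ) < c'), C i ≤ C' ⟨i, h⟩)

open Finset

namespace Finset

variable {α : Type*} [LinearOrder α] {n : ℕ}

theorem card_filter_lt_orderEmbOfFin (s : Finset α) (h : s.card = n) (k : Fin n) :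
    #{a ∈ s | a < s.orderEmbOfFin h k} = k := by
  set e := s.orderEmbOfFin h
  rw [← s.image_orderEmbOfFin_univ h, filter_image, card_image_of_injective _ e.injective]
  simp only [e, OrderEmbedding.lt_iff_lt]
  rw [filter_gt_eq_Iio, Fin.card_Iio]

theorem card_filter_le_orderEmbOfFin (s : Finset α) (h : s.card = n) (k : Fin n) :
    #{a ∈ s | a ≤ s.orderEmbOfFin h k} = k + 1 := by
  set e := s.orderEmbOfFin h
  rw [← s.image_orderEmbOfFin_univ h, filter_image, card_image_of_injective _ e.injective]
  simp only [e, OrderEmbedding.le_iff_le]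
  rw [filter_ge_eq_Iic, Fin.card_Iic]

theorem card_filter_image_univ {ι β : Type*} [Fintype ι] [DecidableEq β] {f : ι → β}
    (hf : Function.Injective f) (p : β → Prop) [DecidablePred p] :
    #{b ∈ univ.image f | p b} = #{i | p (f i)} := by
  rw [filter_image, card_image_of_injective _ hf]

end Finset

theorem Fin.card_filter_le_card_filter_of_val {m n : ℕ} {p : Fin m → Prop} {q : Fin n → Prop}
    [DecidablePred p] [DecidablePred q] (h : ∀ i, p i → ∃ hi : (i : ℕ) < n, q ⟨i, hi⟩) :
    #{i | p i} ≤ #{j | q j} := by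
  rw [← card_map Fin.valEmbedding, ← card_map Fin.valEmbedding (s := {j | q j})]
  refine card_le_card fun x hx => ?_
  simp only [mem_map, mem_filter, mem_univ, true_and, Fin.valEmbedding_apply] at hx ⊢
  obtain ⟨i, hi, rfl⟩ := hx
  obtain ⟨hi', hq⟩ := h i hi
  exact ⟨⟨i, hi'⟩, hq, rfl⟩

section RootColumn

variable {c c' : ℕ} {Croot : Fin c → ℕ} {C' : Fin c' → ℕ}

theorem exists_lt_of_root_le (hc : c ≤ c' + 1)
    (hmatch : ∀ (i : Fin c) (j : Fin c'), Croot i = C' j → (i : ℕ) = (j : ℕ))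
    (horder : ∀ (i i' : Fin c) (hi : (i : ℕ) < c') (hi' : (i' : ℕ) < c'),
      (∀ j : Fin c', Croot i ≠ C' j) → (∀ j : Fin c', Croot i' ≠ C' j) →
      (Croot i < Croot i' ↔ C' ⟨(i : ℕ), hi⟩ < C' ⟨(i' : ℕ), hi'⟩))
    (hbottom : ∀ i : Fin c, (i : ℕ) = c' →
      ∀ i' : Fin c, (∀ j : Fin c', Croot i' ≠ C' j) → Croot i' ≤ Croot i)
    {i : Fin c} (hi : (i : ℕ) < c') (hlt : C' ⟨i, hi⟩ < Croot i)
    (i' : Fin c) (hle : Croot i' ≤ C' ⟨i, hi⟩) :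
    ∃ hi' : (i' : ℕ) < c', C' ⟨i', hi'⟩ < C' ⟨i, hi⟩ := by
  have hi_new : ∀ j, Croot i ≠ C' j := by
    intro j hj
    obtain rfl : j = ⟨i, hi⟩ := Fin.ext (hmatch i j hj).symm
    exact hlt.ne' hj
  by_cases hi'_new : ∀ j, Croot i' ≠ C' j
  · have hi' : (i' : ℕ) < c' := by
      by_contra hge
      have := hbottom i' (by omega) i hi_new
      omega
    exact ⟨hi', (horder i' i hi' hi hi'_new hi_new).1 (by omega)⟩
  · push Not at hi'_new
    obtain ⟨j, hj⟩ := hi'_new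
    have hij : (i' : ℕ) = j := hmatch i' j hj
    refine ⟨hij ▸ j.2, ?_⟩
    rw [show (⟨i', hij ▸ j.2⟩ : Fin c') = j from Fin.ext hij, ← hj]
    refine lt_of_le_of_ne hle fun heq => ?_
    obtain rfl : i' = i := Fin.ext (hmatch i' ⟨i, hi⟩ heq)
    exact hlt.ne heq.symm

end RootColumn

/-- Proposition 4.1: the root configuration `CrootC'` is HHL. The root column `Croot`
is characterized by: it is an arrangement of `S`; entries common with `C'` are
placed in the matching row; distinct entries are paired with the distinct
entries of `C'` in the same relative order; and when `c = c' + 1` the bottom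
entry is the largest distinct entry. -/
theorem root_configuration_is_HHL (c c' : ℕ) (hcc : c = c' ∨ c = c' + 1)
    (C' : Fin c' → ℕ) (hC'inj : Function.Injective C')
    (S : Finset ℕ) (hScard : S.card = c)
    (ht : (Finset.image C' Finset.univ).card = c')
    -- the sorted increasing arrangements of S and C' side by side have weakly
    -- increasing rows:
    (hsorted : ∀ (i : Fin c') (h : (i : ℕ) < c),
      (S.orderIsoOfFin hScard ⟨(i : ℕ), h⟩).1 ≤
        ((Finset.image C' Finset.univ).orderIsoOfFin ht i).1)
    (Croot : Fin c → ℕ)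
    (hinj : Function.Injective Croot)
    (hrangeS : ∀ i, Croot i ∈ S)
    -- common entries are matched row-by-row:
    (hmatch : ∀ (i : Fin c) (j : Fin c'), Croot i = C' j → (i : ℕ) = (j : ℕ))
    -- distinct entries are paired in relative order:
    (horder : ∀ (i i' : Fin c) (hi : (i : ℕ) < c') (hi' : (i' : ℕ) < c'),
      (∀ j : Fin c', Croot i ≠ C' j) → (∀ j : Fin c', Croot i' ≠ C' j) →
      (Croot i < Croot i' ↔ C' ⟨(i : ℕ), hi⟩ < C' ⟨(i' : ℕ), hi'⟩))
    -- when `c = c' + 1`, the bottom row holds the largest distinct entry: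
    (hbottom : ∀ i : Fin c, (i : ℕ) = c' →
      ∀ i' : Fin c, (∀ j : Fin c', Croot i' ≠ C' j) → Croot i' ≤ Croot i) :
    HHL2 c c' Croot C' := by
  refine ⟨hinj, hC'inj, fun i k hk heq => absurd (hmatch i k heq) hk.ne', fun i hi => ?_⟩
  by_contra! hlt
  set y := C' ⟨i, hi⟩
  obtain ⟨k, hk⟩ : y ∈ Set.range ((univ.image C').orderEmbOfFin ht) := by
    rw [range_orderEmbOfFin]
    exact mem_image_of_mem C' (mem_univ _)
  have hS : univ.image Croot = S :=
    eq_of_subset_of_card_le (by simpa [subset_iff] using hrangeS)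
      (by rw [card_image_of_injective _ hinj, card_univ, Fintype.card_fin, hScard])
  have hkS : S.orderEmbOfFin hScard ⟨k, by omega⟩ ≤ y := by
    simpa only [coe_orderIsoOfFin_apply, hk] using hsorted k (by omega)
  have hcount : (k : ℕ) + 1 ≤ k := calc
    (k : ℕ) + 1 = #{v ∈ S | v ≤ S.orderEmbOfFin hScard ⟨k, by omega⟩} :=
      (card_filter_le_orderEmbOfFin S hScard ⟨k, by omega⟩).symm
    _ ≤ #{v ∈ S | v ≤ y} := card_le_card (monotone_filter_right S fun _ _ => (le_trans · hkS))
    _ = #{i' | Croot i' ≤ y} := by rw [← hS, card_filter_image_univ hinj]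
    _ ≤ #{j | C' j < y} := Fin.card_filter_le_card_filter_of_val
      (exists_lt_of_root_le (by omega) hmatch horder hbottom hi hlt)
    _ = #{w ∈ univ.image C' | w < y} := by rw [card_filter_image_univ hC'inj]
    _ = k := by rw [← hk, card_filter_lt_orderEmbOfFin]
  omega
end

section
/- Let CC' be a two-column HHL filling obtained from the root configuration ĈC' by applying a sequence of transpositions from the set A(β) (each transposition switching a pivot entry with another entry of the left column, applied legally). If there exists a legal transposition between two pivot entries of CC' (i.e. a transposition of two pivot entries of the left column whose application again yields an HHL filling), then the Non-overlapping Condition fails for ĈC': there exist two distinct pivot rows j ≠ k with [b_j, d_j] ∩ [b_k, d_k] ≠ ∅, where b_j is the left-column pivot entry in pivot row q_j and d_j is the right-column entry in that row (d_j = ∞ if absent). -/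
/-- Row `i` is a pivot row of the two-column configuration `CC'`:
either the left entry is strictly smaller than the right entry, or the row
lies below the bottom of the right column. -/
def PivotRow (c c' : ℕ) (C : Fin c → ℕ) (C' : Fin c' → ℕ) (i : Fin c) : Prop :=
  c' ≤ (i : ℕ) ∨ ∃ h : (i : ℕ) < c', C i < C' ⟨i, h⟩

/-- The set of pivot entries of the left column. -/
def pivotEntries (c c' : ℕ) (C : Fin c → ℕ) (C' : Fin c' → ℕ) : Set ℕ :=
  {x | ∃ i : Fin c, PivotRow c c' C C' i ∧ C i = x}

/-- Failure of the Non-overlapping Condition: two distinct pivot rows whose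
pivot intervals `[b_j, d_j]` (with `d_j = ∞` when the right entry is absent)
intersect. -/
def Overlap (c c' : ℕ) (C : Fin c → ℕ) (C' : Fin c' → ℕ) : Prop :=
  ∃ i j : Fin c, i ≠ j ∧ PivotRow c c' C C' i ∧ PivotRow c c' C C' j ∧
    ∃ z : ℕ, C i ≤ z ∧ (∀ h : (i : ℕ) < c', z ≤ C' ⟨i, h⟩) ∧
      C j ≤ z ∧ (∀ h : (j : ℕ) < c', z ≤ C' ⟨j, h⟩)

/-! A legal swap of two pivot entries `C a < C b` puts `t = C b` into row `a`, so the rows whose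
right entry is at least `t` (or absent) include row `a` as well as every row of `C` carrying an
entry `≥ t`. If `t` is a pivot entry of the root and no two root pivot intervals meet, every such
row carries a root entry `≥ t`: a root pivot row with entry `< t` would have an interval meeting
the one of `t` at `t` itself. Since `C` and the root have the same entries, this is one row too many. -/

open Finset

lemma card_filter_comp_eq_of_range_eq {ι α : Type*} [Fintype ι] {f g : ι → α}
    (hf : Function.Injective f) (hg : Function.Injective g) (hfg : Set.range f = Set.range g)
    (p : α → Prop) [DecidablePred p] : #{i | p (f i)} = #{i | p (g i)} := by
  classical
  have himage : univ.image f = univ.image g := by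
    rw [← coe_inj, coe_image, coe_image, coe_univ, Set.image_univ, Set.image_univ, hfg]
  rw [← card_image_of_injective _ hf, ← card_image_of_injective _ hg, ← filter_image,
    ← filter_image, himage]

section

variable {c c' : ℕ} {C' : Fin c' → ℕ}

def rightGeRows (c : ℕ) (C' : Fin c' → ℕ) (t : ℕ) : Finset (Fin c) :=
  {r | ∀ h : (r : ℕ) < c', t ≤ C' ⟨r, h⟩}

lemma filter_le_subset_rightGeRows {C : Fin c → ℕ}
    (hrow : ∀ (i : Fin c) (h : (i : ℕ) < c'), C i ≤ C' ⟨i, h⟩) (t : ℕ) :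
    ({i | t ≤ C i} : Finset (Fin c)) ⊆ rightGeRows c C' t := by
  intro i hi
  simp only [rightGeRows, mem_filter, mem_univ, true_and] at hi ⊢
  exact fun h => hi.trans (hrow i h)

lemma PivotRow.le_right {C : Fin c → ℕ} {p : Fin c} (hp : PivotRow c c' C C' p) :
    ∀ h : (p : ℕ) < c', C p ≤ C' ⟨p, h⟩ := by
  intro h
  rcases hp with hp | ⟨_, hlt⟩
  · omega
  · exact hlt.le

lemma rightGeRows_subset_filter_le_of_not_overlap {C : Fin c → ℕ}
    (hrow : ∀ (i : Fin c) (h : (i : ℕ) < c'), C i ≤ C' ⟨i, h⟩) (hno : ¬ Overlap c c' C C')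
    {p : Fin c} (hp : PivotRow c c' C C' p) :
    rightGeRows c C' (C p) ⊆ ({i | C p ≤ C i} : Finset (Fin c)) := by
  intro r hr
  simp only [rightGeRows, mem_filter, mem_univ, true_and] at hr ⊢
  by_cases hpiv : PivotRow c c' C C' r
  · by_contra! hlt
    have hrp : r ≠ p := by rintro rfl; exact hlt.false
    exact hno ⟨r, p, hrp, hpiv, hp, C p, hlt.le, hr, le_rfl, hp.le_right⟩
  · have hr' : (r : ℕ) < c' := by by_contra! h; exact hpiv (Or.inl h)
    have heq : C r = C' ⟨r, hr'⟩ :=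
      (hrow r hr').antisymm (not_lt.mp fun hlt => hpiv (Or.inr ⟨hr', hlt⟩))
    exact heq ▸ hr hr'

lemma overlap_of_lt_of_le_right {Croot C : Fin c → ℕ} (hroot : HHL2 c c' Croot C')
    (hCarr : Set.range C = Set.range Croot) (hC : HHL2 c c' C C') {a b : Fin c}
    (hlt : C a < C b) (hleg : ∀ h : (a : ℕ) < c', C b ≤ C' ⟨a, h⟩)
    (hb : C b ∈ pivotEntries c c' Croot C') : Overlap c c' Croot C' := by
  by_contra hno
  obtain ⟨p, hp, hpb⟩ := hb
  have hsub : insert a ({i | C b ≤ C i} : Finset (Fin c)) ⊆ ({i | C b ≤ Croot i} : Finset (Fin c)) := by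
    rw [← hpb]
    refine (insert_subset ?_ (filter_le_subset_rightGeRows hC.2.2.2 _)).trans
      (rightGeRows_subset_filter_le_of_not_overlap hroot.2.2.2 hno hp)
    simpa [rightGeRows, hpb] using hleg
  have ha : a ∉ ({i | C b ≤ C i} : Finset (Fin c)) := by simpa using hlt
  have hcard := card_le_card hsub
  rw [card_insert_of_notMem ha,
    card_filter_comp_eq_of_range_eq hC.1 hroot.1 hCarr (C b ≤ ·)] at hcard
  omega

end

theorem legal_pivot_swap_implies_overlap_general (c c' : ℕ)
    (C' : Fin c' → ℕ) (Croot : Fin c → ℕ)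
    (hroot : HHL2 c c' Croot C')
    (C : Fin c → ℕ) (hCarr : Set.range C = Set.range Croot)
    (hC : HHL2 c c' C C')
    -- a legal transposition between two pivot entries exists:
    (hswap : ∃ i₁ i₂ : Fin c, i₁ ≠ i₂ ∧
      C i₁ ∈ pivotEntries c c' Croot C' ∧ C i₂ ∈ pivotEntries c c' Croot C' ∧
      HHL2 c c' (C ∘ Equiv.swap i₁ i₂) C') :
    Overlap c c' Croot C' := by
  obtain ⟨a, b, hab, ha, hb, hsw⟩ := hswap
  rcases (hC.1.ne hab).lt_or_gt with hlt | hlt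
  · exact overlap_of_lt_of_le_right hroot hCarr hC hlt
      (fun h => by simpa using hsw.2.2.2 a h) hb
  · exact overlap_of_lt_of_le_right hroot hCarr hC hlt
      (fun h => by simpa using hsw.2.2.2 b h) ha

/-- Lemma 4.1: if a two-column HHL filling `CC'`, obtained by rearranging the
root column `Croot` (an arrangement of the same entries), admits a legal
transposition between two pivot entries, then the Non-overlapping Condition
fails for the root configuration `Croot C'`. -/
theorem legal_pivot_swap_implies_overlap (c c' : ℕ) (hcc : c = c' ∨ c = c' + 1)
    (C' : Fin c' → ℕ) (Croot : Fin c → ℕ)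
    (hroot : HHL2 c c' Croot C')
    -- root characterization: common entries matched, distinct entries in order,
    -- bottom entry largest distinct:
    (hmatch : ∀ (i : Fin c) (j : Fin c'), Croot i = C' j → (i : ℕ) = (j : ℕ))
    (horder : ∀ (i i' : Fin c) (hi : (i : ℕ) < c') (hi' : (i' : ℕ) < c'),
      (∀ j : Fin c', Croot i ≠ C' j) → (∀ j : Fin c', Croot i' ≠ C' j) →
      (Croot i < Croot i' ↔ C' ⟨(i : ℕ), hi⟩ < C' ⟨(i' : ℕ), hi'⟩))
    (hbottom : ∀ i : Fin c, (i : ℕ) = c' →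
      ∀ i' : Fin c, (∀ j : Fin c', Croot i' ≠ C' j) → Croot i' ≤ Croot i)
    (C : Fin c → ℕ) (hCarr : Set.range C = Set.range Croot)
    (hC : HHL2 c c' C C')
    -- a legal transposition between two pivot entries exists:
    (hswap : ∃ i₁ i₂ : Fin c, i₁ ≠ i₂ ∧
      C i₁ ∈ pivotEntries c c' Croot C' ∧ C i₂ ∈ pivotEntries c c' Croot C' ∧
      HHL2 c c' (C ∘ Equiv.swap i₁ i₂) C') :
    Overlap c c' Croot C' :=
  legal_pivot_swap_implies_overlap_general c c' C' Croot hroot C hCarr hC hswap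
end

section
/- If a two-column root configuration ĈC' satisfies the Non-overlapping Condition (the pivot intervals [b_j,d_j] are pairwise disjoint), then for any σ ∈ A(β) with σ.ĈC' an HHL filling, every disjoint cycle of σ, viewed as a permutation of the entries of Ĉ, contains exactly one pivot entry. -/
/-! A non-pivot row `j` has `Croot j = C' j`. Since `Croot ∘ σ` is again an HHL filling, `σ` can
move a row `r` onto such a `j` only downwards (`r < j`), and passing through `j` does not increase
the entries: `Croot (σ j) ≤ C' j = Croot j`. The first fact rules out cycles without pivot rows,
since the lowest row of such a cycle would have to move further down. The second shows that if `p`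
is the pivot row of a cycle with the least entry and `q` the next pivot row after `p` on the cycle,
then `Croot q ≤ C' p`, so `Croot q` lies in both pivot intervals `[Croot p, C' p]` and
`[Croot q, C' q]`; non-overlap then forces `q = p`. -/

theorem Equiv.Perm.SameCycle.exists_first_pow_apply_ne_self {α : Type*} [Finite α]
    {σ : Equiv.Perm α} {P : α → Prop} {p r : α} (h : σ.SameCycle p r) (hr : P r) (hrp : r ≠ p) :
    ∃ k, 0 < k ∧ (σ ^ k) p ≠ p ∧ P ((σ ^ k) p) ∧ ∀ t, 0 < t → t < k → ¬ P ((σ ^ t) p) := by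
  classical
  obtain ⟨m, hm⟩ := h.exists_nat_pow_eq
  have hex : ∃ k, 0 < k ∧ (σ ^ k) p ≠ p ∧ P ((σ ^ k) p) := by
    refine ⟨m, Nat.pos_of_ne_zero fun hm0 => hrp ?_, hm ▸ hrp, hm ▸ hr⟩
    simpa [hm0] using hm.symm
  obtain ⟨hk, hkp, hPk⟩ := Nat.find_spec hex
  refine ⟨Nat.find hex, hk, hkp, hPk, fun t ht htk hPt => ?_⟩
  by_cases hfix : (σ ^ t) p = p
  · -- returning to `p` after `t` steps, the orbit reaches `(σ ^ k) p` already after `k - t`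
    have hshift : (σ ^ (Nat.find hex - t)) p = (σ ^ Nat.find hex) p := by
      conv_rhs => rw [← Nat.sub_add_cancel htk.le, pow_add, Equiv.Perm.mul_apply, hfix]
    exact Nat.find_min hex (Nat.sub_lt hk ht) ⟨Nat.sub_pos_of_lt htk, hshift ▸ hkp, hshift ▸ hPk⟩
  · exact Nat.find_min hex htk ⟨ht, hfix, hPt⟩

section

variable {c c' : ℕ} {C' : Fin c' → ℕ} {Croot : Fin c → ℕ} {σ : Equiv.Perm (Fin c)}

theorem HHL2.exists_eq_of_not_pivotRow (hroot : HHL2 c c' Croot C') {j : Fin c}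
    (h : ¬ PivotRow c c' Croot C' j) : ∃ hj : (j : ℕ) < c', Croot j = C' ⟨j, hj⟩ := by
  simp only [PivotRow, not_or, not_le, not_exists, not_lt] at h
  exact ⟨h.1, le_antisymm (hroot.2.2.2 j h.1) (h.2 h.1)⟩

theorem lt_apply_of_not_pivotRow_apply (hroot : HHL2 c c' Croot C')
    (hC : HHL2 c c' (Croot ∘ σ) C') {r : Fin c} (hr : σ r ≠ r)
    (hnp : ¬ PivotRow c c' Croot C' (σ r)) : r < σ r := by
  obtain ⟨hj, heq⟩ := hroot.exists_eq_of_not_pivotRow hnp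
  exact lt_of_le_of_ne (not_lt.mp fun hlt => hC.2.2.1 r ⟨σ r, hj⟩ hlt heq) hr.symm

theorem apply_le_of_not_pivotRow (hroot : HHL2 c c' Croot C')
    (hC : HHL2 c c' (Croot ∘ σ) C') {j : Fin c} (hnp : ¬ PivotRow c c' Croot C' j) :
    Croot (σ j) ≤ Croot j := by
  obtain ⟨hj, heq⟩ := hroot.exists_eq_of_not_pivotRow hnp
  exact heq ▸ hC.2.2.2 j hj

theorem pow_apply_le_of_not_pivotRow (hroot : HHL2 c c' Croot C')
    (hC : HHL2 c c' (Croot ∘ σ) C') {p : Fin c} (hp : (p : ℕ) < c') {k : ℕ} (hk : 0 < k)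
    (hnp : ∀ t, 0 < t → t < k → ¬ PivotRow c c' Croot C' ((σ ^ t) p)) :
    Croot ((σ ^ k) p) ≤ C' ⟨p, hp⟩ := by
  induction k, hk using Nat.le_induction with
  | base => exact hC.2.2.2 p hp
  | succ k hk ih =>
    calc Croot ((σ ^ (k + 1)) p) = Croot (σ ((σ ^ k) p)) := by rw [pow_succ', Equiv.Perm.mul_apply]
      _ ≤ Croot ((σ ^ k) p) := apply_le_of_not_pivotRow hroot hC (hnp k hk k.lt_succ_self)
      _ ≤ C' ⟨p, hp⟩ := ih fun t ht htk => hnp t ht (htk.trans k.lt_succ_self)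

theorem exists_pivotRow_sameCycle (hroot : HHL2 c c' Croot C')
    (hC : HHL2 c c' (Croot ∘ σ) C') {i : Fin c} (hi : σ i ≠ i) :
    ∃ j, σ.SameCycle i j ∧ PivotRow c c' Croot C' j := by
  classical
  by_contra! hnp
  -- the last row of the cycle would have to move further down
  obtain ⟨r, hr, hmax⟩ := (Finset.univ.filter (σ.SameCycle i)).exists_max_image id
    ⟨i, Finset.mem_filter.mpr ⟨Finset.mem_univ i, Equiv.Perm.SameCycle.refl σ i⟩⟩
  rw [Finset.mem_filter] at hr
  have hσr : σ.SameCycle i (σ r) := Equiv.Perm.sameCycle_apply_right.mpr hr.2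
  have hlt := lt_apply_of_not_pivotRow_apply hroot hC (fun h => hi (hr.2.apply_eq_self_iff.mpr h))
    (hnp _ hσr)
  exact hlt.not_ge (hmax _ (Finset.mem_filter.mpr ⟨Finset.mem_univ _, hσr⟩))

theorem eq_of_sameCycle_of_pivotRow (hroot : HHL2 c c' Croot C')
    (hC : HHL2 c c' (Croot ∘ σ) C') (hno : ¬ Overlap c c' Croot C') {p r : Fin c}
    (hp : PivotRow c c' Croot C' p) (hr : PivotRow c c' Croot C' r) (hpr : σ.SameCycle p r) :
    p = r := by
  classical
  by_contra hne
  set S := Finset.univ.filter fun j => σ.SameCycle p j ∧ PivotRow c c' Croot C' j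
  have hS : ∀ {j}, j ∈ S ↔ σ.SameCycle p j ∧ PivotRow c c' Croot C' j := by simp [S]
  obtain ⟨p₀, hp₀, hmin⟩ := S.exists_min_image Croot ⟨p, hS.mpr ⟨.refl σ p, hp⟩⟩
  obtain ⟨r₀, hr₀, hr₀p₀⟩ : ∃ r₀ ∈ S, r₀ ≠ p₀ := by
    by_cases h : p = p₀
    · exact ⟨r, hS.mpr ⟨hpr, hr⟩, fun h' => hne (h.trans h'.symm)⟩
    · exact ⟨p, hS.mpr ⟨.refl σ p, hp⟩, h⟩
  -- the pivot row with the least entry and the next pivot row after it along the cycle overlap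
  obtain ⟨k, hk, hkp₀, hkpiv, hnp⟩ :=
    ((hS.mp hp₀).1.symm.trans (hS.mp hr₀).1).exists_first_pow_apply_ne_self (hS.mp hr₀).2 hr₀p₀
  have hq : (σ ^ k) p₀ ∈ S := hS.mpr ⟨Equiv.Perm.sameCycle_pow_right.mpr (hS.mp hp₀).1, hkpiv⟩
  exact hno ⟨p₀, (σ ^ k) p₀, hkp₀.symm, (hS.mp hp₀).2, hkpiv, Croot ((σ ^ k) p₀), hmin _ hq,
    fun h => pow_apply_le_of_not_pivotRow hroot hC h hk hnp, le_rfl, hroot.2.2.2 _⟩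

end

theorem cycle_structure_general (c c' : ℕ)
    (C' : Fin c' → ℕ) (Croot : Fin c → ℕ)
    (hroot : HHL2 c c' Croot C')
    (hno : ¬ Overlap c c' Croot C')
    (σ : Equiv.Perm (Fin c)) (hC : HHL2 c c' (Croot ∘ σ) C') :
    ∀ i : Fin c, σ i ≠ i →
      ∃! j : Fin c, σ.SameCycle i j ∧ σ j ≠ j ∧ PivotRow c c' Croot C' j := by
  intro i hi
  obtain ⟨j, hij, hj⟩ := exists_pivotRow_sameCycle hroot hC hi
  refine ⟨j, ⟨hij, fun h => hi (hij.apply_eq_self_iff.mpr h), hj⟩, ?_⟩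
  rintro y ⟨hiy, -, hy⟩
  exact eq_of_sameCycle_of_pivotRow hroot hC hno hy hj (hiy.symm.trans hij)

/-- Lemma 4.2 (cycle structure): if the root configuration `Croot C'` satisfies
the Non-overlapping Condition, then for the (unique) permutation `σ` of the
rows with `C = Croot ∘ σ` giving an HHL filling `CC'`, every nontrivial cycle
of `σ` contains exactly one pivot row. -/
theorem cycle_structure (c c' : ℕ) (hcc : c = c' ∨ c = c' + 1)
    (C' : Fin c' → ℕ) (Croot : Fin c → ℕ)
    (hroot : HHL2 c c' Croot C')
    (hmatch : ∀ (i : Fin c) (j : Fin c'), Croot i = C' j → (i : ℕ) = (j : ℕ))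
    (horder : ∀ (i i' : Fin c) (hi : (i : ℕ) < c') (hi' : (i' : ℕ) < c'),
      (∀ j : Fin c', Croot i ≠ C' j) → (∀ j : Fin c', Croot i' ≠ C' j) →
      (Croot i < Croot i' ↔ C' ⟨(i : ℕ), hi⟩ < C' ⟨(i' : ℕ), hi'⟩))
    (hbottom : ∀ i : Fin c, (i : ℕ) = c' →
      ∀ i' : Fin c, (∀ j : Fin c', Croot i' ≠ C' j) → Croot i' ≤ Croot i)
    (hno : ¬ Overlap c c' Croot C')
    (σ : Equiv.Perm (Fin c)) (hC : HHL2 c c' (Croot ∘ σ) C') :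
    ∀ i : Fin c, σ i ≠ i →
      ∃! j : Fin c, σ.SameCycle i j ∧ σ j ≠ j ∧ PivotRow c c' Croot C' j :=
  cycle_structure_general c c' C' Croot hroot hno σ hC
end

section
/- Let CC' be a two-column HHL filling and let (p<q) be a legal transposition of left-column entries with p in a row strictly above q's row, i.e. r(p) < r(q). Then inv((p<q)CC') = inv(CC') + N_{p,q}[C'_{>r(p)} ∩ C'_{<r(q)}], where N_{p,q}[S] counts entries k of S with p < k < q, and C'_{>r(p)} ∩ C'_{<r(q)} is the set of entries of C' lying strictly below row r(p) and strictly above row r(q). -/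
/-- HHL inversion statistic of a two-column filling `CC'`: pairs of cells
`u = (j,1)`, `v = (i,2)` with `i < j`, `C(j) < C'(i)`, and `C'(i) < C'(j)`
whenever row `j` has a right entry. -/
noncomputable def inv2 (c c' : ℕ) (C : Fin c → ℕ) (C' : Fin c' → ℕ) : ℕ :=
  Set.ncard {p : Fin c' × Fin c | (p.1 : ℕ) < (p.2 : ℕ) ∧ C p.2 < C' p.1 ∧
    ∀ h : (p.2 : ℕ) < c', C' p.1 < C' ⟨(p.2 : ℕ), h⟩}

/-!
`inv2` is a sum over left rows `j` of the number of right entries above row `j` whose value lies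
strictly between `C j` and the right entry of row `j`, and the swap changes only rows `r(p)` and
`r(q)`. The HHL conditions of both fillings bound the right entries of both rows below by `q` and
forbid the value `q` above `r(q)`, so raising a row's left value from `p` to `q` loses exactly the
right entries above it with value in `(p, q)`. Such entries above `r(q)` but not above `r(p)` lie
strictly between the two rows, the right entry of row `r(p)` being `≥ q`.
-/

def rowInversions {c' : ℕ} (C' : Fin c' → ℕ) (j v : ℕ) : Set (Fin c') :=
  {k | (k : ℕ) < j ∧ v < C' k ∧ ∀ h : j < c', C' k < C' ⟨j, h⟩}

theorem inv2_eq_sum_ncard_rowInversions (c c' : ℕ) (C : Fin c → ℕ) (C' : Fin c' → ℕ) :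
    inv2 c c' C C' = ∑ j : Fin c, (rowInversions C' j (C j)).ncard := by
  classical
  simp only [inv2, rowInversions, Set.ncard_eq_toFinset_card', Set.toFinset_ofPred,
    Finset.card_filter, Fintype.sum_prod_type_right]

theorem Fintype.sum_comp_swap_add {ι α M : Type*} [Fintype ι] [DecidableEq ι] [AddCommMonoid M]
    (F : ι → α → M) (g : ι → α) {a b : ι} (hab : a ≠ b) :
    ∑ j, F j (g (Equiv.swap a b j)) + (F a (g a) + F b (g b))
      = ∑ j, F j (g j) + (F a (g b) + F b (g a)) := by
  have split : ∀ G : ι → M, ∑ j, G j = ∑ j ∈ {a, b}ᶜ, G j + (G a + G b) := fun G => by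
    rw [← Finset.sum_pair hab, add_comm, Finset.sum_add_sum_compl]
  rw [split, split (fun j => F j (g j)), Finset.sum_congr rfl fun j hj => by
    simp only [Finset.mem_compl, Finset.mem_insert, Finset.mem_singleton, not_or] at hj
    rw [Equiv.swap_apply_of_ne_of_ne hj.1 hj.2]]
  simp only [Equiv.swap_apply_left, Equiv.swap_apply_right]
  abel

def entriesAboveBetween {c' : ℕ} (C' : Fin c' → ℕ) (j p q : ℕ) : Set (Fin c') :=
  {k | (k : ℕ) < j ∧ p < C' k ∧ C' k < q}

theorem ncard_rowInversions_eq_add {c' : ℕ} (C' : Fin c' → ℕ) {j p q : ℕ} (hpq : p ≤ q)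
    (hq : ∀ h : j < c', q ≤ C' ⟨j, h⟩) (hne : ∀ k : Fin c', (k : ℕ) < j → C' k ≠ q) :
    (rowInversions C' j p).ncard
      = (rowInversions C' j q).ncard + (entriesAboveBetween C' j p q).ncard := by
  have hunion : rowInversions C' j p = rowInversions C' j q ∪ entriesAboveBetween C' j p q := by
    ext k
    simp only [rowInversions, entriesAboveBetween, Set.mem_union, Set.mem_ofPred_eq]
    constructor
    · rintro ⟨hk, hp, hj⟩
      by_cases hkq : q < C' k
      · exact .inl ⟨hk, hkq, hj⟩
      · exact .inr ⟨hk, hp, lt_of_le_of_ne (not_lt.1 hkq) (hne k hk)⟩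
    · rintro (⟨hk, hkq, hj⟩ | ⟨hk, hp, hkq⟩)
      · exact ⟨hk, hpq.trans_lt hkq, hj⟩
      · exact ⟨hk, hp, fun h => hkq.trans_le (hq h)⟩
  have hdisj : Disjoint (rowInversions C' j q) (entriesAboveBetween C' j p q) :=
    Set.disjoint_left.2 fun k hk hk' => (hk.2.1.trans hk'.2.2).false
  rw [hunion, Set.ncard_union_eq hdisj]

theorem ncard_entriesAboveBetween_eq_add {c' : ℕ} (C' : Fin c' → ℕ) {j₁ j₂ p q : ℕ}
    (hj : j₁ < j₂) (hq : ∀ h : j₁ < c', q ≤ C' ⟨j₁, h⟩) :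
    (entriesAboveBetween C' j₂ p q).ncard = (entriesAboveBetween C' j₁ p q).ncard
      + {k : Fin c' | j₁ < (k : ℕ) ∧ (k : ℕ) < j₂ ∧ p < C' k ∧ C' k < q}.ncard := by
  have hunion : entriesAboveBetween C' j₂ p q = entriesAboveBetween C' j₁ p q
      ∪ {k : Fin c' | j₁ < (k : ℕ) ∧ (k : ℕ) < j₂ ∧ p < C' k ∧ C' k < q} := by
    ext k
    simp only [entriesAboveBetween, Set.mem_union, Set.mem_ofPred_eq]
    constructor
    · rintro ⟨hk, hp, hkq⟩
      rcases lt_trichotomy (k : ℕ) j₁ with hlt | heq | hgt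
      · exact .inl ⟨hlt, hp, hkq⟩
      · -- row `j₁` itself is excluded since its right entry is at least `q`
        exact absurd (hq (heq ▸ k.isLt)) (by simp only [← heq, Fin.eta]; omega)
      · exact .inr ⟨hgt, hk, hp, hkq⟩
    · rintro (⟨hk, hp, hkq⟩ | ⟨-, hk, hp, hkq⟩)
      · exact ⟨hk.trans hj, hp, hkq⟩
      · exact ⟨hk, hp, hkq⟩
  have hdisj : Disjoint (entriesAboveBetween C' j₁ p q)
      {k : Fin c' | j₁ < (k : ℕ) ∧ (k : ℕ) < j₂ ∧ p < C' k ∧ C' k < q} :=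
    Set.disjoint_left.2 fun k hk hk' => (hk.1.trans hk'.1).false
  rw [hunion, Set.ncard_union_eq hdisj]

/-- Lemma 4.4: if `(p<q)` is a legal transposition of left-column entries
`p = C i₁ < q = C i₂` with `r(p) < r(q)`, then the inversion statistic grows by
the number of right-column entries strictly between rows `r(p)` and `r(q)` and
strictly between `p` and `q` in value. -/
theorem inv_change_of_legal_swap (c c' : ℕ) (C : Fin c → ℕ) (C' : Fin c' → ℕ)
    (hC : HHL2 c c' C C') (i₁ i₂ : Fin c) (hrow : i₁ < i₂)
    (hpq : C i₁ < C i₂)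
    (hlegal : HHL2 c c' (C ∘ Equiv.swap i₁ i₂) C') :
    inv2 c c' (C ∘ Equiv.swap i₁ i₂) C'
      = inv2 c c' C C' + Set.ncard {k : Fin c' |
          (i₁ : ℕ) < (k : ℕ) ∧ (k : ℕ) < (i₂ : ℕ) ∧
          C i₁ < C' k ∧ C' k < C i₂} := by
  obtain ⟨-, -, hCne, hCle⟩ := hC
  have hq₁ : ∀ h : (i₁ : ℕ) < c', C i₂ ≤ C' ⟨i₁, h⟩ := by
    simpa using hlegal.2.2.2 i₁
  have hne : ∀ k : Fin c', (k : ℕ) < i₂ → C' k ≠ C i₂ := fun k hk => (hCne i₂ k hk).symm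
  have hswap := Fintype.sum_comp_swap_add (fun (j : Fin c) v => (rowInversions C' j v).ncard) C
    hrow.ne
  have h₁ := ncard_rowInversions_eq_add C' hpq.le hq₁ fun k hk => hne k (hk.trans hrow)
  have h₂ := ncard_rowInversions_eq_add C' hpq.le (hCle i₂) hne
  have h₁₂ := ncard_entriesAboveBetween_eq_add C' (p := C i₁) hrow hq₁
  simp only [inv2_eq_sum_ncard_rowInversions, Function.comp_apply] at hswap ⊢
  omega
end

section
/- Let CC' be a two-column configuration with weakly increasing rows, and let (p<q) be a legal transposition where q is a non-pivot entry of CC', meaning its row is not a pivot row. Then des((p<q)CC') = des(CC') + 1, where des counts rows i with C(i) < C'(i). -/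
/-- Descent statistic of a two-column filling: rows with a strict increase from
left to right. -/
noncomputable def des2 (c c' : ℕ) (C : Fin c → ℕ) (C' : Fin c' → ℕ) : ℕ :=
  Set.ncard {i : Fin c' | ∃ j : Fin c, (j : ℕ) = (i : ℕ) ∧ C j < C' i}

/-- Lemma 4.3: a legal transposition `(p<q)` swapping a pivot entry `p = C i₁`
with a non-pivot entry `q = C i₂` (whose row has equal left and right entries)
increases the descent statistic by exactly one. -/
theorem des_change_of_legal_swap (c c' : ℕ) (C : Fin c → ℕ) (C' : Fin c' → ℕ)
    (hC : HHL2 c c' C C') (i₁ i₂ : Fin c)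
    (hpivot : PivotRow c c' C C' i₁)
    (hnonpivot : ∃ j : Fin c', (j : ℕ) = (i₂ : ℕ) ∧ C i₂ = C' j)
    (hpq : C i₁ < C i₂)
    (hlegal : HHL2 c c' (C ∘ Equiv.swap i₁ i₂) C') :
    des2 c c' (C ∘ Equiv.swap i₁ i₂) C' = des2 c c' C C' + 1 := by
  obtain ⟨j₀, hj₀v, hj₀e⟩ := hnonpivot
  have hne : i₁ ≠ i₂ := fun h => absurd hpq (by rw [h]; exact lt_irrefl _)
  have hs1 : (C ∘ Equiv.swap i₁ i₂) i₁ = C i₂ := by simp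
  have hs2 : (C ∘ Equiv.swap i₁ i₂) i₂ = C i₁ := by simp
  -- i₁ and i₂ are different rows, hence different as naturals? No, i₁ ≠ i₂ as Fin c.
  have hval : (i₁ : ℕ) ≠ (i₂ : ℕ) := fun h => hne (Fin.ext h)
  set S : Set (Fin c') := {i : Fin c' | ∃ j : Fin c, (j : ℕ) = (i : ℕ) ∧ C j < C' i} with hS
  set S' : Set (Fin c') := {i : Fin c' | ∃ j : Fin c, (j : ℕ) = (i : ℕ) ∧ (C ∘ Equiv.swap i₁ i₂) j < C' i} with hS'
  have hj₀notS : j₀ ∉ S := by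
    rintro ⟨k, hkv, hk⟩
    have : k = i₂ := Fin.ext (by rw [hkv, hj₀v])
    rw [this, ← hj₀e] at hk
    exact lt_irrefl _ hk
  have key : S' = insert j₀ S := by
    ext i
    constructor
    · rintro ⟨k, hkv, hk⟩
      by_cases h1 : k = i₁
      · rw [h1] at hkv hk
        rw [hs1] at hk
        exact Or.inr ⟨i₁, hkv, lt_trans hpq hk⟩
      by_cases h2 : k = i₂
      · subst h2
        exact Or.inl (Fin.ext (by rw [← hkv, hj₀v]))
      · refine Or.inr ⟨k, hkv, ?_⟩
        rwa [Function.comp_apply, Equiv.swap_apply_of_ne_of_ne h1 h2] at hk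
    · rintro (rfl | ⟨k, hkv, hk⟩)
      · exact ⟨i₂, by rw [hj₀v], by rw [hs2, ← hj₀e]; exact hpq⟩
      · by_cases h1 : k = i₁
        · rw [h1] at hkv hk
          refine ⟨i₁, hkv, ?_⟩
          rw [hs1]
          have hlt : (i₁ : ℕ) < c' := by rw [hkv]; exact i.2
          have hle : (C ∘ Equiv.swap i₁ i₂) i₁ ≤ C' ⟨(i₁ : ℕ), hlt⟩ :=
            hlegal.2.2.2 i₁ _
          rw [hs1] at hle
          have hieq : i = ⟨(i₁ : ℕ), hlt⟩ := Fin.ext (by simp [← hkv])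
          rw [hieq]
          rcases lt_or_eq_of_le hle with h | h
          · exact h
          · exfalso
            have := hC.2.1 (hj₀e.symm.trans h)
            apply hval
            rw [← hj₀v, this]
        · by_cases h2 : k = i₂
          · exfalso
            subst h2
            have : i = j₀ := Fin.ext (by rw [← hkv, hj₀v])
            rw [this, ← hj₀e] at hk
            exact lt_irrefl _ hk
          · refine ⟨k, hkv, ?_⟩
            rwa [Function.comp_apply, Equiv.swap_apply_of_ne_of_ne h1 h2]
  show S'.ncard = S.ncard + 1
  rw [key, Set.ncard_insert_of_notMem hj₀notS (Set.toFinite S)]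
end

section
/- Fix a column C' of length c' with entries in [n] and a set S of size c ∈ {c', c'+1} as in the generation algorithm. Every left column C such that CC' is a two-column HHL filling is obtained from the root column Ĉ by a unique sequence of transpositions σ ∈ A(β): that is, the map A(β) → {HHL left columns for C'}, σ ↦ σ.Ĉ (restricted to those σ for which each successive transposition is legal) is a bijection onto the set of all arrangements C of S with CC' HHL. -/
/-- Swap the two values `x` and `y` in the column `f` (transposition of
entries). -/
def vswap (c : ℕ) (x y : ℕ) (f : Fin c → ℕ) : Fin c → ℕ :=
  fun i => if f i = x then y else if f i = y then x else f i

/-- Apply the first `l` steps of a choice sequence `ch` to the column `C0`: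
at step `l` (where `a l` is the `l`-th largest entry of the column), if
`ch l = some b` then the transposition `(b < a l)` is applied. This realizes
an element of `A(β)`, which uses at most one transposition from each row of
`β`. -/
def applySeq (c : ℕ) (ch : ℕ → Option ℕ) (a : ℕ → ℕ) (C0 : Fin c → ℕ) :
    ℕ → Fin c → ℕ
  | 0 => C0
  | l + 1 =>
    match ch l with
    | none => applySeq c ch a C0 l
    | some b => vswap c (a l) b (applySeq c ch a C0 l)

/-!
Process the entries `a 0 > a 1 > ⋯` in turn. Every step after step `l` moves only entries smaller
than `a l`, so step `l` must put `a l` into the row it occupies in `C`; this forces the whole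
sequence of transpositions. Conversely, the greedy choice is legal: the entry `b` displaced at
step `l` is smaller than `a l` and does not occur in `C'`, for if `b = C' k` then, by the matching
condition on the root column, `b` would still sit in row `k`, and `C` would hold `a l > C' k` there.
So `b` is a pivot entry and the transposition keeps the filling HHL.
-/

section Transposition

variable {c : ℕ}

lemma vswap_eq_swap_comp (x y : ℕ) (f : Fin c → ℕ) : vswap c x y f = Equiv.swap x y ∘ f := by
  funext i
  simp [vswap, Equiv.swap_apply_def]

lemma vswap_injective {f : Fin c → ℕ} (hf : Function.Injective f) (x y : ℕ) :
    Function.Injective (vswap c x y f) := by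
  rw [vswap_eq_swap_comp]
  exact (Equiv.injective _).comp hf

lemma range_vswap {f : Fin c → ℕ} {x y : ℕ} (hx : x ∈ Set.range f) (hy : y ∈ Set.range f) :
    Set.range (vswap c x y f) = Set.range f := by
  rw [vswap_eq_swap_comp, Set.range_comp]
  refine Set.image_perm fun z hz => ?_
  rcases Equiv.eq_or_eq_of_swap_apply_ne_self hz with rfl | rfl <;> assumption

lemma vswap_apply_eq_iff {v x y : ℕ} (hx : v ≠ x) (hy : v ≠ y) (f : Fin c → ℕ) (i : Fin c) :
    vswap c x y f i = v ↔ f i = v := by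
  rw [vswap_eq_swap_comp, Function.comp_apply, Equiv.swap_apply_eq_iff,
    Equiv.swap_apply_of_ne_of_ne hx hy]

end Transposition

section ApplySeq

variable {c : ℕ} {ch ch' : ℕ → Option ℕ} {a : ℕ → ℕ} {C0 : Fin c → ℕ}

lemma applySeq_succ_of_none {l : ℕ} (h : ch l = none) :
    applySeq c ch a C0 (l + 1) = applySeq c ch a C0 l := by
  simp [applySeq, h]

lemma applySeq_succ_of_some {l b : ℕ} (h : ch l = some b) :
    applySeq c ch a C0 (l + 1) = vswap c (a l) b (applySeq c ch a C0 l) := by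
  simp [applySeq, h]

lemma applySeq_congr {l : ℕ} (h : ∀ m < l, ch m = ch' m) :
    applySeq c ch a C0 l = applySeq c ch' a C0 l := by
  induction l with
  | zero => rfl
  | succ l ih => simp only [applySeq, h l l.lt_succ_self, ih fun m hm => h m (by omega)]

lemma range_applySeq {n : ℕ}
    (h : ∀ m < n, ∀ b, ch m = some b → a m ∈ Set.range C0 ∧ b ∈ Set.range C0) :
    Set.range (applySeq c ch a C0 n) = Set.range C0 := by
  induction n with
  | zero => rfl
  | succ n ih =>
    have ih := ih fun m hm => h m (by omega)
    cases hch : ch n with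
    | none => rw [applySeq_succ_of_none hch, ih]
    | some b =>
      obtain ⟨han, hb⟩ := h n (by omega) b hch
      rw [applySeq_succ_of_some hch, range_vswap (ih ▸ han) (ih ▸ hb), ih]

lemma applySeq_apply_eq_iff_of_le {l n v : ℕ} (hln : l ≤ n)
    (hv : ∀ m, l ≤ m → m < n → a m ≠ v ∧ ch m ≠ some v) (i : Fin c) :
    applySeq c ch a C0 n i = v ↔ applySeq c ch a C0 l i = v := by
  induction n, hln using Nat.le_induction with
  | base => rfl
  | succ n hln ih =>
    rw [← ih fun m hlm hmn => hv m hlm (by omega)]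
    obtain ⟨hav, hchv⟩ := hv n hln n.lt_succ_self
    cases hch : ch n with
    | none => rw [applySeq_succ_of_none hch]
    | some b =>
      rw [applySeq_succ_of_some hch,
        vswap_apply_eq_iff (Ne.symm hav) (by rintro rfl; exact hchv hch)]

lemma applySeq_succ_apply_eq_iff (l : ℕ) (i : Fin c) :
    applySeq c ch a C0 (l + 1) i = a l ↔ applySeq c ch a C0 l i = (ch l).getD (a l) := by
  cases hch : ch l with
  | none => simp [applySeq_succ_of_none hch]
  | some b =>
    rw [applySeq_succ_of_some hch, vswap_eq_swap_comp, Function.comp_apply,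
      Equiv.swap_apply_eq_iff, Equiv.swap_apply_left, Option.getD_some]

theorem eq_of_applySeq_eq (ha : StrictAntiOn a (Set.Iio c))
    (hch : ∀ l b, ch l = some b → b < a l) (hch' : ∀ l b, ch' l = some b → b < a l)
    (hnone : ∀ l, c ≤ l → ch l = none) (hnone' : ∀ l, c ≤ l → ch' l = none)
    (hrange : ∀ l < c, a l ∈ Set.range (applySeq c ch a C0 c))
    (heq : applySeq c ch a C0 c = applySeq c ch' a C0 c) : ch = ch' := by
  funext l
  induction l using Nat.strong_induction_on with
  | _ l ih =>
  rcases lt_or_ge l c with hl | hl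
  swap
  · rw [hnone l hl, hnone' l hl]
  have hlast : ∀ ch : ℕ → Option ℕ, (∀ l b, ch l = some b → b < a l) → ∀ i,
      applySeq c ch a C0 c i = a l ↔ applySeq c ch a C0 (l + 1) i = a l := by
    intro ch hch i
    refine applySeq_apply_eq_iff_of_le hl (fun m hlm hmc => ?_) i
    have hlt : a m < a l := ha hl hmc (by omega)
    exact ⟨hlt.ne, fun h => (hch m _ h).not_gt hlt⟩
  obtain ⟨i, hi⟩ := hrange l hl
  have hgetD : (ch l).getD (a l) = (ch' l).getD (a l) := by
    rw [← (applySeq_succ_apply_eq_iff l i).1 ((hlast ch hch i).1 hi),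
      ← (applySeq_succ_apply_eq_iff l i).1 ((hlast ch' hch' i).1 (heq ▸ hi)),
      applySeq_congr ih]
  cases hb : ch l <;> cases hb' : ch' l <;> simp only [hb, hb', Option.getD_none,
    Option.getD_some] at hgetD
  · rfl
  · exact absurd hgetD (hch' l _ hb').ne'
  · exact absurd hgetD (hch l _ hb).ne
  · rw [hgetD]

end ApplySeq

lemma exists_lt_eq_of_mem_range {c : ℕ} {f : Fin c → ℕ} (hf : Function.Injective f)
    {a : ℕ → ℕ} (ha : Set.InjOn a (Set.Iio c)) (haf : ∀ l < c, a l ∈ Set.range f) :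
    ∀ v ∈ Set.range f, ∃ l < c, a l = v := by
  classical
  intro v hv
  have hsurj : Set.SurjOn a (Finset.range c) (Finset.univ.image f) := by
    refine Finset.surjOn_of_injOn_of_card_le a (fun l hl => ?_) (by simpa using ha) ?_
    · obtain ⟨i, hi⟩ := haf l (Finset.mem_range.1 hl)
      simp [← hi]
    · simp [Finset.card_image_of_injective _ hf]
  obtain ⟨l, hl, rfl⟩ := hsurj (by simpa using hv)
  exact ⟨l, by simpa using hl, rfl⟩

section HHL

variable {c c' : ℕ} {C' : Fin c' → ℕ}

lemma HHL2.vswap_of_lt_of_notMem {E C : Fin c → ℕ} (hE : HHL2 c c' E C') (hC : HHL2 c c' C C')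
    {q : Fin c} (hlt : E q < C q) (hfree : E q ∉ Set.range C') :
    HHL2 c c' (vswap c (C q) (E q) E) C' := by
  obtain ⟨hEinj, hC'inj, hEatt, hErow⟩ := hE
  obtain ⟨-, -, hCatt, hCrow⟩ := hC
  refine ⟨vswap_injective hEinj _ _, hC'inj, fun i k hki => ?_, fun i hi => ?_⟩ <;>
    simp only [vswap] <;> split_ifs with h₁ h₂
  · exact fun h => hfree ⟨k, h.symm⟩
  · obtain rfl := hEinj h₂; exact hCatt i k hki
  · exact hEatt i k hki
  · exact hlt.le.trans (h₁ ▸ hErow i hi)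
  · obtain rfl := hEinj h₂; exact hCrow i hi
  · exact hErow i hi

lemma mem_pivotEntries_of_notMem_range {R : Fin c → ℕ} (hR : HHL2 c c' R C') {b : ℕ}
    (hb : b ∈ Set.range R) (hfree : b ∉ Set.range C') : b ∈ pivotEntries c c' R C' := by
  obtain ⟨i, rfl⟩ := hb
  refine ⟨i, ?_, rfl⟩
  rcases le_or_gt c' i with hi | hi
  · exact Or.inl hi
  · exact Or.inr ⟨hi, (hR.2.2.2 i hi).lt_of_ne fun h => hfree ⟨_, h.symm⟩⟩

end HHL

structure IsPartialGeneration (c c' : ℕ) (C' : Fin c' → ℕ) (Croot C : Fin c → ℕ) (a : ℕ → ℕ)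
    (n : ℕ) (ch : ℕ → Option ℕ) : Prop where
  eq_none : ∀ m, n ≤ m → ch m = none
  mem_range : ∀ m b, ch m = some b → b ∈ Set.range Croot
  notMem_range : ∀ m b, ch m = some b → b ∉ Set.range C'
  lt : ∀ m b, ch m = some b → b < a m
  hhl : ∀ m ≤ n, HHL2 c c' (applySeq c ch a Croot m) C'
  placed : ∀ j < n, ∀ i, C i = a j → applySeq c ch a Croot n i = a j

namespace IsPartialGeneration

variable {c c' : ℕ} {C' : Fin c' → ℕ} {Croot C : Fin c → ℕ} {a : ℕ → ℕ} {n : ℕ}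
  {ch : ℕ → Option ℕ}

lemma range_applySeq (hg : IsPartialGeneration c c' C' Croot C a n ch)
    (haS : ∀ l < c, a l ∈ Set.range Croot) (hn : n ≤ c) :
    Set.range (applySeq c ch a Croot n) = Set.range Croot :=
  _root_.range_applySeq fun m hm b hb => ⟨haS m (by omega), hg.mem_range m b hb⟩

lemma apply_mem_range (hg : IsPartialGeneration c c' C' Croot C a n ch)
    (haS : ∀ l < c, a l ∈ Set.range Croot) (hn : n ≤ c) (q : Fin c) :
    applySeq c ch a Croot n q ∈ Set.range Croot :=
  hg.range_applySeq haS hn ▸ Set.mem_range_self q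

lemma apply_ne (hg : IsPartialGeneration c c' C' Croot C a n ch) (ha : StrictAntiOn a (Set.Iio c))
    (haC : ∀ l < c, a l ∈ Set.range C) (hn : n < c) {q : Fin c} (hq : C q = a n) {j : ℕ}
    (hj : j < n) : applySeq c ch a Croot n q ≠ a j := by
  intro hqj
  obtain ⟨i, hi⟩ := haC j (by omega)
  have hiq : i = q := (hg.hhl n le_rfl).1 (by rw [hg.placed j hj i hi, hqj])
  exact hj.ne (ha.injOn (Set.mem_Iio.2 (by omega)) (Set.mem_Iio.2 hn) (hi.symm.trans (hiq ▸ hq)))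

lemma apply_lt (hg : IsPartialGeneration c c' C' Croot C a n ch) (ha : StrictAntiOn a (Set.Iio c))
    (henum : ∀ v ∈ Set.range Croot, ∃ l < c, a l = v) (haS : ∀ l < c, a l ∈ Set.range Croot)
    (haC : ∀ l < c, a l ∈ Set.range C) (hn : n < c) {q : Fin c} (hq : C q = a n)
    (hqn : applySeq c ch a Croot n q ≠ a n) : applySeq c ch a Croot n q < a n := by
  obtain ⟨m, hm, hmq⟩ := henum _ (hg.apply_mem_range haS hn.le q)
  rw [← hmq]
  refine ha (Set.mem_Iio.2 hn) (Set.mem_Iio.2 hm) ?_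
  by_contra! hmn
  rcases hmn.lt_or_eq with hmn | rfl
  · exact hg.apply_ne ha haC hn hq hmn hmq.symm
  · exact hqn hmq.symm

lemma apply_notMem_range (hg : IsPartialGeneration c c' C' Croot C a n ch)
    (hC : HHL2 c c' C C') (hmatch : ∀ (i : Fin c) (j : Fin c'), Croot i = C' j → (i : ℕ) = j)
    (ha : StrictAntiOn a (Set.Iio c)) (haS : ∀ l < c, a l ∈ Set.range Croot) (hn : n < c)
    {q : Fin c} (hq : C q = a n) (hlt : applySeq c ch a Croot n q < a n) :
    applySeq c ch a Croot n q ∉ Set.range C' := by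
  set E := applySeq c ch a Croot n
  rintro ⟨k, hk⟩
  obtain ⟨i, hi⟩ := hg.apply_mem_range haS hn.le q
  have hik : (i : ℕ) = k := hmatch i k (hi.trans hk.symm)
  have hstay : E i = Croot i := by
    refine (applySeq_apply_eq_iff_of_le n.zero_le (fun m _ hm => ⟨?_, fun h => ?_⟩) i).2 rfl
    · rw [hi]; exact (hlt.trans (ha (Set.mem_Iio.2 (by omega)) (Set.mem_Iio.2 hn) hm)).ne'
    · exact hg.notMem_range m _ h ⟨k, hk.trans hi.symm⟩
  obtain rfl : i = q := (hg.hhl n le_rfl).1 (hstay.trans hi)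
  have hrow := hC.2.2.2 i (hik ▸ k.2)
  rw [hq, show (⟨i, hik ▸ k.2⟩ : Fin c') = k from Fin.ext hik] at hrow
  exact hlt.not_ge (hrow.trans_eq hk)

lemma zero (hroot : HHL2 c c' Croot C') :
    IsPartialGeneration c c' C' Croot C a 0 fun _ => none where
  eq_none _ _ := rfl
  mem_range _ _ h := by cases h
  notMem_range _ _ h := by cases h
  lt _ _ h := by cases h
  hhl m hm := by obtain rfl := Nat.le_zero.1 hm; exact hroot
  placed _ h := absurd h (Nat.not_lt_zero _)

lemma succ_of_apply_eq (hg : IsPartialGeneration c c' C' Croot C a n ch) (hC : HHL2 c c' C C')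
    {q : Fin c} (hq : C q = a n) (hqn : applySeq c ch a Croot n q = a n) :
    IsPartialGeneration c c' C' Croot C a (n + 1) ch := by
  have hsucc := applySeq_succ_of_none (a := a) (C0 := Croot) (hg.eq_none n le_rfl)
  refine ⟨fun m hm => hg.eq_none m (by omega), hg.mem_range, hg.notMem_range, hg.lt,
    fun m hm => ?_, fun j hj i hi => ?_⟩
  · rcases Nat.le_succ_iff.1 hm with hm | rfl
    · exact hg.hhl m hm
    · exact hsucc ▸ hg.hhl n le_rfl
  · rw [hsucc]
    rcases Nat.lt_succ_iff_lt_or_eq.1 hj with hj | rfl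
    · exact hg.placed j hj i hi
    · rwa [hC.1 (hi.trans hq.symm)]

lemma succ_of_apply_ne (hg : IsPartialGeneration c c' C' Croot C a n ch) (hC : HHL2 c c' C C')
    (hmatch : ∀ (i : Fin c) (j : Fin c'), Croot i = C' j → (i : ℕ) = j)
    (ha : StrictAntiOn a (Set.Iio c)) (henum : ∀ v ∈ Set.range Croot, ∃ l < c, a l = v)
    (haS : ∀ l < c, a l ∈ Set.range Croot) (haC : ∀ l < c, a l ∈ Set.range C) (hn : n < c)
    {q : Fin c} (hq : C q = a n) (hqn : applySeq c ch a Croot n q ≠ a n) :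
    IsPartialGeneration c c' C' Croot C a (n + 1)
      (Function.update ch n (some (applySeq c ch a Croot n q))) := by
  set E := applySeq c ch a Croot n
  set ch' := Function.update ch n (some (E q)) with hch'_def
  have hlt : E q < a n := hg.apply_lt ha henum haS haC hn hq hqn
  have hfree : E q ∉ Set.range C' := hg.apply_notMem_range hC hmatch ha haS hn hq hlt
  have hprefix : ∀ m ≤ n, applySeq c ch' a Croot m = applySeq c ch a Croot m := fun m hm =>
    applySeq_congr fun l hl => Function.update_of_ne (by omega) _ _
  have hstep : applySeq c ch' a Croot (n + 1) = vswap c (C q) (E q) E := by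
    rw [applySeq_succ_of_some (Function.update_self n _ ch), hprefix n le_rfl, hq]
  have hch' : ∀ m b, ch' m = some b → m = n ∧ b = E q ∨ ch m = some b := by
    intro m b h
    by_cases hm : m = n
    · subst hm
      rw [hch'_def, Function.update_self, Option.some.injEq] at h
      exact Or.inl ⟨rfl, h.symm⟩
    · exact Or.inr (by rwa [hch'_def, Function.update_of_ne hm] at h)
  refine ⟨fun m hm => ?_, fun m b h => ?_, fun m b h => ?_, fun m b h => ?_, fun m hm => ?_,
    fun j hj i hi => ?_⟩
  · rw [hch'_def, Function.update_of_ne (by omega)]; exact hg.eq_none m (by omega)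
  · rcases hch' m b h with ⟨-, rfl⟩ | h
    exacts [hg.apply_mem_range haS hn.le q, hg.mem_range m b h]
  · rcases hch' m b h with ⟨-, rfl⟩ | h
    exacts [hfree, hg.notMem_range m b h]
  · rcases hch' m b h with ⟨rfl, rfl⟩ | h
    exacts [hlt, hg.lt m b h]
  · rcases Nat.le_succ_iff.1 hm with hm | rfl
    · exact hprefix m hm ▸ hg.hhl m hm
    · exact hstep ▸ (hg.hhl n le_rfl).vswap_of_lt_of_notMem hC (hq ▸ hlt) hfree
  · rw [hstep]
    rcases Nat.lt_succ_iff_lt_or_eq.1 hj with hj | rfl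
    · have hjn : a j ≠ C q := hq ▸ (ha (Set.mem_Iio.2 (by omega)) (Set.mem_Iio.2 hn) hj).ne'
      rw [vswap_apply_eq_iff hjn (hg.apply_ne ha haC hn hq hj).symm]
      exact hg.placed j hj i hi
    · obtain rfl := hC.1 (hi.trans hq.symm)
      simp [vswap, hq, hqn]

theorem exists_of_le (hroot : HHL2 c c' Croot C') (hC : HHL2 c c' C C')
    (hmatch : ∀ (i : Fin c) (j : Fin c'), Croot i = C' j → (i : ℕ) = j)
    (ha : StrictAntiOn a (Set.Iio c)) (henum : ∀ v ∈ Set.range Croot, ∃ l < c, a l = v)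
    (haS : ∀ l < c, a l ∈ Set.range Croot) (haC : ∀ l < c, a l ∈ Set.range C) :
    ∀ n ≤ c, ∃ ch, IsPartialGeneration c c' C' Croot C a n ch
  | 0, _ => ⟨_, zero hroot⟩
  | n + 1, hn => by
    obtain ⟨ch, hg⟩ := exists_of_le hroot hC hmatch ha henum haS haC n (by omega)
    obtain ⟨q, hq⟩ := haC n hn
    by_cases hqn : applySeq c ch a Croot n q = a n
    · exact ⟨ch, hg.succ_of_apply_eq hC hq hqn⟩
    · exact ⟨_, hg.succ_of_apply_ne hC hmatch ha henum haS haC hn hq hqn⟩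

lemma applySeq_eq (hg : IsPartialGeneration c c' C' Croot C a c ch)
    (henum : ∀ v ∈ Set.range Croot, ∃ l < c, a l = v)
    (hCarr : Set.range C = Set.range Croot) : applySeq c ch a Croot c = C := by
  funext i
  obtain ⟨j, hj, hji⟩ := henum (C i) (hCarr ▸ ⟨i, rfl⟩)
  rw [← hji, hg.placed j hj i hji.symm]

end IsPartialGeneration

theorem generation_algorithm_unique_general (c c' : ℕ)
    (C' : Fin c' → ℕ) (Croot : Fin c → ℕ)
    (hroot : HHL2 c c' Croot C')
    (hmatch : ∀ (i : Fin c) (j : Fin c'), Croot i = C' j → (i : ℕ) = (j : ℕ))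
    -- `a` enumerates the entries of the column in strictly decreasing order:
    (a : ℕ → ℕ)
    (ha : ∀ l l', l < l' → l' < c → a l' < a l)
    (haS : ∀ l < c, ∃ i : Fin c, Croot i = a l)
    (C : Fin c → ℕ) (hCarr : Set.range C = Set.range Croot)
    (hC : HHL2 c c' C C') :
    ∃! ch : ℕ → Option ℕ,
      (∀ l, c ≤ l → ch l = none) ∧
      (∀ l b, ch l = some b → b ∈ pivotEntries c c' Croot C' ∧ b < a l) ∧
      (∀ l < c, HHL2 c c' (applySeq c ch a Croot (l + 1)) C') ∧
      applySeq c ch a Croot c = C := by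
  have hanti : StrictAntiOn a (Set.Iio c) := fun l _ m hm hlm => ha l m hlm hm
  have haC : ∀ l < c, a l ∈ Set.range C := fun l hl => hCarr ▸ haS l hl
  have henum := exists_lt_eq_of_mem_range hroot.1 hanti.injOn haS
  obtain ⟨ch, hg⟩ :=
    IsPartialGeneration.exists_of_le hroot hC hmatch hanti henum haS haC c le_rfl
  have hchC := hg.applySeq_eq henum hCarr
  refine ⟨ch, ⟨hg.eq_none, fun l b h => ⟨?_, hg.lt l b h⟩, fun l hl => hg.hhl (l + 1) hl, hchC⟩,
    fun ch' ⟨hnone', hpiv', _, hC'⟩ => ?_⟩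
  · exact mem_pivotEntries_of_notMem_range hroot (hg.mem_range l b h) (hg.notMem_range l b h)
  · exact eq_of_applySeq_eq hanti (fun l b h => (hpiv' l b h).2) hg.lt hnone' hg.eq_none
      (by rwa [hC']) (hC'.trans hchC.symm)

/-- Proposition 4.2: the generation algorithm uniquely generates all two-column
HHL configurations. Every left column `C` that is an arrangement of the root
column `Croot` with `CC'` HHL is obtained from `Croot` by a unique legal
sequence `σ ∈ A(β)` of transpositions, each switching a pivot entry `b` with a
strictly larger entry `a l`. -/
theorem generation_algorithm_unique (c c' : ℕ) (hcc : c = c' ∨ c = c' + 1)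
    (C' : Fin c' → ℕ) (Croot : Fin c → ℕ)
    (hroot : HHL2 c c' Croot C')
    (hmatch : ∀ (i : Fin c) (j : Fin c'), Croot i = C' j → (i : ℕ) = (j : ℕ))
    (horder : ∀ (i i' : Fin c) (hi : (i : ℕ) < c') (hi' : (i' : ℕ) < c'),
      (∀ j : Fin c', Croot i ≠ C' j) → (∀ j : Fin c', Croot i' ≠ C' j) →
      (Croot i < Croot i' ↔ C' ⟨(i : ℕ), hi⟩ < C' ⟨(i' : ℕ), hi'⟩))
    (hbottom : ∀ i : Fin c, (i : ℕ) = c' →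
      ∀ i' : Fin c, (∀ j : Fin c', Croot i' ≠ C' j) → Croot i' ≤ Croot i)
    -- `a` enumerates the entries of the column in strictly decreasing order:
    (a : ℕ → ℕ)
    (ha : ∀ l l', l < l' → l' < c → a l' < a l)
    (haS : ∀ l < c, ∃ i : Fin c, Croot i = a l)
    (C : Fin c → ℕ) (hCarr : Set.range C = Set.range Croot)
    (hC : HHL2 c c' C C') :
    ∃! ch : ℕ → Option ℕ,
      (∀ l, c ≤ l → ch l = none) ∧
      (∀ l b, ch l = some b → b ∈ pivotEntries c c' Croot C' ∧ b < a l) ∧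
      (∀ l < c, HHL2 c c' (applySeq c ch a Croot (l + 1)) C') ∧
      applySeq c ch a Croot c = C :=
  generation_algorithm_unique_general c c' C' Croot hroot hmatch a ha haS C hCarr hC
end

section
/- Fix a column Cᵢ of an HHL filling and let Ĉ be the root left column for Cᵢ. If ĈCᵢ satisfies the Non-overlapping Condition, then inv(ĈCᵢT') = inv(CᵢT') + N̂(i), where N̂(i) = Σ_{j=1}^{p} N_{b_j,d_j}[C_{i,<r(b_j)} ∩ Ĉ] counts, over all pivot rows j, the entries of Cᵢ lying strictly above the pivot row r(b_j) that also appear in Ĉ and lie strictly between b_j and d_j; here T' is the filling consisting of the columns to the right of Cᵢ and inv is the HHL inversion statistic. -/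
/-- The HHL inversion statistic of the filling consisting of columns
`s, s+1, …, m-1` of `σ`: triples `((j,k),i)` recording cells `u = (j,k)` and
`v = (i,k+1)` with `i < j`, `σ(u) < σ(v)`, and `σ(v) < σ(w)` for `w` the right
neighbor of `u` when it exists. -/
noncomputable def invFrom (σ : ℕ → ℕ → ℕ) (colLen : ℕ → ℕ) (m s : ℕ) : ℕ :=
  Set.ncard {q : (ℕ × ℕ) × ℕ |
    s ≤ q.1.2 ∧ q.1.2 + 1 < m ∧ q.1.1 < colLen q.1.2 ∧
    q.2 < colLen (q.1.2 + 1) ∧ q.2 < q.1.1 ∧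
    σ q.1.1 q.1.2 < σ q.2 (q.1.2 + 1) ∧
    (q.1.1 < colLen (q.1.2 + 1) → σ q.2 (q.1.2 + 1) < σ q.1.1 (q.1.2 + 1))}

/-- Row `r` is a pivot row of the two leftmost columns `0` and `1` of the
filling `σ`: either the row lies below the bottom of column `1`, or the entry
in column `0` is strictly less than the entry in column `1`. -/
def PivotRow01 (colLen : ℕ → ℕ) (σ : ℕ → ℕ → ℕ) (r : ℕ) : Prop :=
  r < colLen 0 ∧ (colLen 1 ≤ r ∨ σ r 0 < σ r 1)

/-- The Non-overlapping Condition for the two leftmost columns: no two distinct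
pivot rows have intersecting pivot intervals `[b_j, d_j]` (`d_j = ∞` when the
right entry is absent). -/
def NonOverlap01 (colLen : ℕ → ℕ) (σ : ℕ → ℕ → ℕ) : Prop :=
  ¬ ∃ r r' : ℕ, PivotRow01 colLen σ r ∧ PivotRow01 colLen σ r' ∧ r ≠ r' ∧
    ∃ z : ℕ, σ r 0 ≤ z ∧ (r < colLen 1 → z ≤ σ r 1) ∧
      σ r' 0 ≤ z ∧ (r' < colLen 1 → z ≤ σ r' 1)

/-- Column `0` is the root column for column `1`: common entries matched
row-by-row, distinct entries paired in relative order, and any row of column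
`0` below the bottom of column `1` carries the largest distinct entry. -/
def IsRoot01 (colLen : ℕ → ℕ) (σ : ℕ → ℕ → ℕ) : Prop :=
  (∀ r < colLen 0, ∀ r' < colLen 1, σ r 0 = σ r' 1 → r = r') ∧
  (∀ r < colLen 0, ∀ r' < colLen 0, r < colLen 1 → r' < colLen 1 →
    (∀ s < colLen 1, σ r 0 ≠ σ s 1) → (∀ s < colLen 1, σ r' 0 ≠ σ s 1) →
    (σ r 0 < σ r' 0 ↔ σ r 1 < σ r' 1)) ∧
  (∀ r, r = colLen 1 → r < colLen 0 →
    ∀ r' < colLen 0, (∀ s < colLen 1, σ r' 0 ≠ σ s 1) → σ r' 0 ≤ σ r 0)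

/-- `N̂`: over all pivot rows `r`, the number of rows `r' < r` whose entry in
column `1` also appears in column `0` and lies strictly between the pivot
entries `b = σ r 0` and `d = σ r 1` (no upper constraint when `d` is absent). -/
noncomputable def Nhat01 (colLen : ℕ → ℕ) (σ : ℕ → ℕ → ℕ) : ℕ :=
  Set.ncard {p : ℕ × ℕ | PivotRow01 colLen σ p.1 ∧ p.2 < p.1 ∧ p.2 < colLen 1 ∧
    (∃ r < colLen 0, σ r 0 = σ p.2 1) ∧ σ p.1 0 < σ p.2 1 ∧
    (p.1 < colLen 1 → σ p.2 1 < σ p.1 1)}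


/-!
Splitting off the leftmost column, `inv(ĈCᵢT')` is `inv(CᵢT')` plus the number of inversion
pairs `u = (j, Ĉ)`, `v = (i, Cᵢ)` with `i < j`. Such a pair makes row `j` a pivot row whose
pivot interval contains `Cᵢ(i)`. If `Cᵢ(i)` did not occur in `Ĉ`, row `i` would be a pivot row as
well, its interval also containing `Cᵢ(i)`, against the Non-overlapping Condition. So the
inversion pairs between `Ĉ` and `Cᵢ` are exactly the pairs counted by `N̂(i)`.
-/

def invSet (σ : ℕ → ℕ → ℕ) (colLen : ℕ → ℕ) (m s : ℕ) : Set ((ℕ × ℕ) × ℕ) :=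
  {q | s ≤ q.1.2 ∧ q.1.2 + 1 < m ∧ q.1.1 < colLen q.1.2 ∧
    q.2 < colLen (q.1.2 + 1) ∧ q.2 < q.1.1 ∧ σ q.1.1 q.1.2 < σ q.2 (q.1.2 + 1) ∧
    (q.1.1 < colLen (q.1.2 + 1) → σ q.2 (q.1.2 + 1) < σ q.1.1 (q.1.2 + 1))}

/-- `(j, i)` encodes the inversion pair of cells `(j, k)` and `(i, k + 1)`. -/
def colInv (σ : ℕ → ℕ → ℕ) (colLen : ℕ → ℕ) (k : ℕ) : Set (ℕ × ℕ) :=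
  {p | p.1 < colLen k ∧ p.2 < colLen (k + 1) ∧ p.2 < p.1 ∧ σ p.1 k < σ p.2 (k + 1) ∧
    (p.1 < colLen (k + 1) → σ p.2 (k + 1) < σ p.1 (k + 1))}

section invFrom

variable (σ : ℕ → ℕ → ℕ) (colLen : ℕ → ℕ) (m : ℕ)

theorem invFrom_eq_ncard_invSet (s : ℕ) : invFrom σ colLen m s = (invSet σ colLen m s).ncard :=
  rfl

theorem finite_invSet (s : ℕ) : (invSet σ colLen m s).Finite := by
  set M := (Finset.range m).sup colLen
  have hM : ∀ k < m, colLen k ≤ M := fun k hk => Finset.le_sup (Finset.mem_range.mpr hk)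
  refine (((Set.finite_Iio M).prod (Set.finite_Iio m)).prod (Set.finite_Iio M)).subset ?_
  rintro ⟨⟨j, k⟩, i⟩ ⟨-, hk, hj, hi, -⟩
  dsimp only at hk hj hi
  exact ⟨⟨hj.trans_le (hM k (by omega)), show k < m by omega⟩, hi.trans_le (hM _ hk)⟩

theorem invSet_eq_union {s : ℕ} (hs : s + 1 < m) :
    invSet σ colLen m s =
      invSet σ colLen m (s + 1) ∪ (fun p : ℕ × ℕ => ((p.1, s), p.2)) '' colInv σ colLen s := by
  ext ⟨⟨j, k⟩, i⟩
  simp only [invSet, colInv, Set.mem_union, Set.mem_ofPred_eq, Set.mem_image, Prod.exists,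
    Prod.mk.injEq]
  constructor
  · rintro ⟨hsk, hk, rest⟩
    rcases Nat.eq_or_lt_of_le hsk with rfl | hlt
    · exact Or.inr ⟨j, i, rest, ⟨rfl, rfl⟩, rfl⟩
    · exact Or.inl ⟨hlt, hk, rest⟩
  · rintro (⟨hsk, rest⟩ | ⟨j', i', rest, ⟨rfl, rfl⟩, rfl⟩)
    · exact ⟨by omega, rest⟩
    · exact ⟨le_rfl, hs, rest⟩

theorem invFrom_eq_invFrom_succ_add {s : ℕ} (hs : s + 1 < m) :
    invFrom σ colLen m s = invFrom σ colLen m (s + 1) + (colInv σ colLen s).ncard := by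
  have hinj : Function.Injective fun p : ℕ × ℕ => ((p.1, s), p.2) := by
    rintro ⟨a, b⟩ ⟨c, d⟩ h
    simp_all
  have hdisj : Disjoint (invSet σ colLen m (s + 1))
      ((fun p : ℕ × ℕ => ((p.1, s), p.2)) '' colInv σ colLen s) := by
    rw [Set.disjoint_left]
    rintro _ ⟨hsk, -⟩ ⟨p, -, rfl⟩
    exact absurd hsk (by simp)
  have hfin := finite_invSet σ colLen m s
  rw [invSet_eq_union σ colLen m hs] at hfin
  rw [invFrom_eq_ncard_invSet, invSet_eq_union σ colLen m hs,
    Set.ncard_union_eq hdisj (hfin.subset Set.subset_union_left)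
      (hfin.subset Set.subset_union_right), Set.ncard_image_of_injective _ hinj]
  rfl

end invFrom

section RootColumn

variable {σ : ℕ → ℕ → ℕ} {colLen : ℕ → ℕ}

theorem pivotRow01_of_mem_colInv {j i : ℕ} (h : (j, i) ∈ colInv σ colLen 0) :
    PivotRow01 colLen σ j := by
  obtain ⟨hj, -, -, hlt, hright⟩ := h
  refine ⟨hj, ?_⟩
  rcases lt_or_ge j (colLen 1) with hj1 | hj1
  · exact Or.inr (hlt.trans (hright hj1))
  · exact Or.inl hj1

theorem exists_eq_of_mem_colInv (hlen : colLen 1 ≤ colLen 0)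
    (hrow : ∀ i < colLen 1, σ i 0 ≤ σ i 1) (hno : NonOverlap01 colLen σ) {j i : ℕ}
    (h : (j, i) ∈ colInv σ colLen 0) : ∃ r < colLen 0, σ r 0 = σ i 1 := by
  have hj := pivotRow01_of_mem_colInv h
  obtain ⟨-, hi, hij, hlt, hright⟩ := h
  by_contra! hnew
  have hi0 : i < colLen 0 := hi.trans_le hlen
  have hi_pivot : PivotRow01 colLen σ i :=
    ⟨hi0, Or.inr ((hrow i hi).lt_of_ne (hnew i hi0))⟩
  exact hno ⟨i, j, hi_pivot, hj, hij.ne, σ i 1, hrow i hi, fun _ => le_rfl, hlt.le,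
    fun hj1 => (hright hj1).le⟩

theorem nhat01_eq_ncard_colInv (hlen : colLen 1 ≤ colLen 0)
    (hrow : ∀ i < colLen 1, σ i 0 ≤ σ i 1) (hno : NonOverlap01 colLen σ) :
    Nhat01 colLen σ = (colInv σ colLen 0).ncard := by
  refine congr_arg Set.ncard (Set.ext fun ⟨j, i⟩ => ⟨?_, fun h => ?_⟩)
  · rintro ⟨⟨hj, -⟩, hij, hi, -, hlt, hright⟩
    exact ⟨hj, hi, hij, hlt, hright⟩
  · have hshared := exists_eq_of_mem_colInv hlen hrow hno h
    have hj := pivotRow01_of_mem_colInv h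
    obtain ⟨-, hi, hij, hlt, hright⟩ := h
    exact ⟨hj, hij, hi, hshared, hlt, hright⟩

end RootColumn

theorem inv_of_root_column_general (m : ℕ) (hm : 2 ≤ m) (colLen : ℕ → ℕ)
    (σ : ℕ → ℕ → ℕ)
    (hanti : ∀ j, j + 1 < m → colLen (j + 1) ≤ colLen j)
    (hrow : ∀ j, j + 1 < m → ∀ i < colLen (j + 1), σ i j ≤ σ i (j + 1))
    (hno : NonOverlap01 colLen σ) :
    invFrom σ colLen m 0 = invFrom σ colLen m 1 + Nhat01 colLen σ := by
  rw [invFrom_eq_invFrom_succ_add σ colLen m hm,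
    nhat01_eq_ncard_colInv (hanti 0 hm) (hrow 0 hm) hno]

/-- Lemma 4.6: if the leftmost column of the filling is the root column for its
neighbor and the Non-overlapping Condition holds, then
`inv(ĈCᵢT') = inv(CᵢT') + N̂(i)`. -/
theorem inv_of_root_column (m n : ℕ) (hm : 2 ≤ m) (colLen : ℕ → ℕ)
    (σ : ℕ → ℕ → ℕ)
    (hanti : ∀ j, j + 1 < m → colLen (j + 1) ≤ colLen j)
    (hvals : ∀ j < m, ∀ i < colLen j, σ i j ∈ Finset.Icc 1 n)
    (hrow : ∀ j, j + 1 < m → ∀ i < colLen (j + 1), σ i j ≤ σ i (j + 1))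
    (hcol : ∀ j < m, ∀ i i', i < i' → i' < colLen j → σ i j ≠ σ i' j)
    (hatt : ∀ j, j + 1 < m → ∀ i i', i' < i → i < colLen j → i' < colLen (j + 1) →
      σ i j ≠ σ i' (j + 1))
    (hroot : IsRoot01 colLen σ)
    (hno : NonOverlap01 colLen σ) :
    invFrom σ colLen m 0 = invFrom σ colLen m 1 + Nhat01 colLen σ :=
  inv_of_root_column_general m hm colLen σ hanti hrow hno
end

section
/- Fix a column Cᵢ and its root left column Ĉ. Then ℓ(Ĉ) = ℓ(Cᵢ) + N̂(i) − Ň(i), where ℓ of a column is its number of inversions as a sequence (pairs of positions r < s with larger entry above smaller), N̂(i) = Σ_j N_{b_j,d_j}[C_{i,<r(b_j)} ∩ Ĉ] and Ň(i) = Σ_j N_{b_j,d_j}[C_{i,>r(b_j)} ∩ Ĉ], summing over pivot rows j with pivot entries b_j (left) and d_j (right, ∞ if absent). -/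
/-- Number of inversions of a column, viewed as a sequence: pairs of rows
`r < s` with the larger entry above the smaller. -/
noncomputable def colInvF (k : ℕ) (C : Fin k → ℕ) : ℕ :=
  Set.ncard {p : Fin k × Fin k | p.1 < p.2 ∧ C p.2 < C p.1}

/-- `N̂(i)`: over all pivot rows `r`, the entries of `Cᵢ` strictly above row `r`
that also appear in `Croot` and lie strictly between `b = Croot r` and
`d = Cᵢ r` (no upper constraint when `d` is absent). -/
noncomputable def NhatF (c c' : ℕ) (Croot : Fin c → ℕ) (C' : Fin c' → ℕ) : ℕ :=
  Set.ncard {p : Fin c × Fin c' | PivotRow c c' Croot C' p.1 ∧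
    (p.2 : ℕ) < (p.1 : ℕ) ∧ C' p.2 ∈ Set.range Croot ∧ Croot p.1 < C' p.2 ∧
    ∀ h : (p.1 : ℕ) < c', C' p.2 < C' ⟨(p.1 : ℕ), h⟩}

/-- `Ň(i)`: the analogous count for entries of `Cᵢ` strictly below the pivot
rows. -/
noncomputable def NcheckF (c c' : ℕ) (Croot : Fin c → ℕ) (C' : Fin c' → ℕ) : ℕ :=
  Set.ncard {p : Fin c × Fin c' | PivotRow c c' Croot C' p.1 ∧
    (p.1 : ℕ) < (p.2 : ℕ) ∧ C' p.2 ∈ Set.range Croot ∧ Croot p.1 < C' p.2 ∧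
    ∀ h : (p.1 : ℕ) < c', C' p.2 < C' ⟨(p.1 : ℕ), h⟩}


open Function Set

section InversionExchange

variable {ι α : Type*} [LinearOrder ι] [LinearOrder α]

theorem lt_or_between_iff_lt_or_between {br dr bs ds : α} (hr : br ≤ dr) (hs : bs ≤ ds)
    (hb : br ≠ bs) (hd : dr ≠ ds) (hpiv : br < dr → bs < ds → (bs < br ↔ ds < dr)) :
    bs < br ∨ (bs = ds ∧ br < ds ∧ ds < dr) ↔ ds < dr ∨ (br = dr ∧ bs < dr ∧ dr < ds) := by
  grind

theorem ncard_inversions_add_ncard_eq [Finite ι] (b d : ι → α) (hb : Injective b)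
    (hd : Injective d) (hbd : b ≤ d)
    (hpiv : ∀ r s, r < s → b r < d r → b s < d s → (b s < b r ↔ d s < d r)) :
    {p : ι × ι | p.1 < p.2 ∧ b p.2 < b p.1}.ncard +
        {p : ι × ι | p.1 < p.2 ∧ b p.2 = d p.2 ∧ b p.1 < d p.2 ∧ d p.2 < d p.1}.ncard =
      {p : ι × ι | p.1 < p.2 ∧ d p.2 < d p.1}.ncard +
        {p : ι × ι | p.1 < p.2 ∧ b p.1 = d p.1 ∧ b p.2 < d p.1 ∧ d p.1 < d p.2}.ncard := by
  rw [← ncard_union_eq, ← ncard_union_eq, ← ofPred_or, ← ofPred_or]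
  · congr 1
    ext ⟨r, s⟩
    simp only [mem_ofPred_eq, ← and_or_left, and_congr_right_iff]
    intro hrs
    exact lt_or_between_iff_lt_or_between (hbd r) (hbd s) (hb.ne hrs.ne) (hd.ne hrs.ne)
      (hpiv r s hrs)
  · exact disjoint_left.2 fun p ⟨_, h⟩ ⟨_, _, _, h'⟩ => by order
  · exact disjoint_left.2 fun p ⟨_, h⟩ ⟨_, h', h'', _⟩ => by order

end InversionExchange

def entryOrTop {c' : ℕ} (C' : Fin c' → ℕ) (i : ℕ) : WithTop ℕ :=
  if h : i < c' then C' ⟨i, h⟩ else ⊤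

section RootColumn

variable {c c' : ℕ} (C' : Fin c' → ℕ) {Croot : Fin c → ℕ}

theorem entryOrTop_of_lt {i : ℕ} (h : i < c') : entryOrTop C' i = C' ⟨i, h⟩ := dif_pos h

theorem entryOrTop_of_le {i : ℕ} (h : c' ≤ i) : entryOrTop C' i = ⊤ := dif_neg h.not_gt

@[simp]
theorem entryOrTop_val (j : Fin c') : entryOrTop C' j = C' j := entryOrTop_of_lt C' j.isLt

theorem coe_eq_entryOrTop_iff {x i : ℕ} :
    (x : WithTop ℕ) = entryOrTop C' i ↔ ∃ h : i < c', x = C' ⟨i, h⟩ := by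
  unfold entryOrTop; split_ifs with h <;> simp [h]

theorem coe_lt_entryOrTop_iff {x i : ℕ} :
    (x : WithTop ℕ) < entryOrTop C' i ↔ ∀ h : i < c', x < C' ⟨i, h⟩ := by
  unfold entryOrTop; split_ifs with h <;> simp [h]

theorem coe_le_entryOrTop_iff {x i : ℕ} :
    (x : WithTop ℕ) ≤ entryOrTop C' i ↔ ∀ h : i < c', x ≤ C' ⟨i, h⟩ := by
  unfold entryOrTop; split_ifs with h <;> simp [h]

theorem pivotRow_iff_lt_entryOrTop {i : Fin c} :
    PivotRow c c' Croot C' i ↔ (Croot i : WithTop ℕ) < entryOrTop C' i := by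
  rw [coe_lt_entryOrTop_iff, PivotRow]
  by_cases h : (i : ℕ) < c' <;> simp [h, not_lt.1]

variable {C'}

theorem injective_entryOrTop (hC' : Injective C') (hc : c ≤ c' + 1) :
    Injective fun i : Fin c => entryOrTop C' i := by
  intro i j hij
  rcases lt_or_ge (i : ℕ) c' with hi | hi <;> rcases lt_or_ge (j : ℕ) c' with hj | hj <;>
    simp only [hi, hj, entryOrTop_of_lt, entryOrTop_of_le, Nat.cast_inj, WithTop.natCast_ne_top,
      WithTop.top_ne_natCast] at hij
  · exact Fin.ext (Fin.mk.inj_iff.1 (hC' hij))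
  · exact Fin.ext (by omega)

theorem PivotRow.ne (hmatch : ∀ (i : Fin c) (j : Fin c'), Croot i = C' j → (i : ℕ) = (j : ℕ))
    {i : Fin c} (hi : PivotRow c c' Croot C' i) (j : Fin c') : Croot i ≠ C' j := by
  intro hij
  have hij' := hmatch i j hij
  rcases hi with hi | ⟨hi, hlt⟩
  · omega
  · rw [hij, show (⟨i, hi⟩ : Fin c') = j from Fin.ext hij'] at hlt
    exact hlt.false

theorem lt_iff_entryOrTop_lt_of_pivotRow (hc : c ≤ c' + 1)
    (hmatch : ∀ (i : Fin c) (j : Fin c'), Croot i = C' j → (i : ℕ) = (j : ℕ))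
    (horder : ∀ (i i' : Fin c) (hi : (i : ℕ) < c') (hi' : (i' : ℕ) < c'),
      (∀ j : Fin c', Croot i ≠ C' j) → (∀ j : Fin c', Croot i' ≠ C' j) →
      (Croot i < Croot i' ↔ C' ⟨(i : ℕ), hi⟩ < C' ⟨(i' : ℕ), hi'⟩))
    (hbottom : ∀ i : Fin c, (i : ℕ) = c' →
      ∀ i' : Fin c, (∀ j : Fin c', Croot i' ≠ C' j) → Croot i' ≤ Croot i)
    {r s : Fin c} (hrs : r < s) (hr : PivotRow c c' Croot C' r)
    (hs : PivotRow c c' Croot C' s) :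
    (Croot s : WithTop ℕ) < Croot r ↔ entryOrTop C' s < entryOrTop C' r := by
  rcases lt_or_ge (s : ℕ) c' with hsc | hsc
  · have hrc : (r : ℕ) < c' := lt_trans hrs hsc
    rw [entryOrTop_of_lt C' hsc, entryOrTop_of_lt C' hrc, Nat.cast_lt, Nat.cast_lt]
    exact horder s r hsc hrc (hs.ne hmatch) (hr.ne hmatch)
  · rw [entryOrTop_of_le C' hsc]
    simp only [not_top_lt, iff_false, not_lt, Nat.cast_le]
    exact hbottom s (by omega) r (hr.ne hmatch)

theorem mem_range_iff_eq_castLE (hc : c' ≤ c)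
    (hmatch : ∀ (i : Fin c) (j : Fin c'), Croot i = C' j → (i : ℕ) = (j : ℕ)) (j : Fin c') :
    C' j ∈ range Croot ↔ Croot (Fin.castLE hc j) = C' j := by
  refine ⟨fun ⟨i, hi⟩ => ?_, fun h => ⟨_, h⟩⟩
  obtain rfl : i = Fin.castLE hc j := Fin.ext (hmatch i j hi)
  exact hi

theorem colInvF_eq_ncard_entryOrTop (hc : c' ≤ c) :
    colInvF c' C' =
      {p : Fin c × Fin c | p.1 < p.2 ∧ entryOrTop C' p.2 < entryOrTop C' p.1}.ncard := by
  rw [colInvF, ← ncard_preimage_of_injective_subset_range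
    ((Fin.castLE_injective hc).prodMap (Fin.castLE_injective hc))]
  · congr 1; ext ⟨r, s⟩; simp
  · rintro ⟨r, s⟩ ⟨hrs, hlt⟩
    have hs : (s : ℕ) < c' := by
      by_contra! hs
      rw [entryOrTop_of_le C' hs] at hlt
      exact not_top_lt hlt
    exact ⟨(⟨r, lt_trans hrs hs⟩, ⟨s, hs⟩), rfl⟩

theorem NhatF_eq_ncard_entryOrTop (hc : c' ≤ c)
    (hmatch : ∀ (i : Fin c) (j : Fin c'), Croot i = C' j → (i : ℕ) = (j : ℕ)) :
    NhatF c c' Croot C' =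
      {p : Fin c × Fin c | p.1 < p.2 ∧ (Croot p.1 : WithTop ℕ) = entryOrTop C' p.1 ∧
        (Croot p.2 : WithTop ℕ) < entryOrTop C' p.1 ∧
        entryOrTop C' p.1 < entryOrTop C' p.2}.ncard := by
  rw [NhatF, ← ncard_preimage_of_injective_subset_range
    (((Fin.castLE_injective hc).prodMap (injective_id (α := Fin c))).comp Prod.swap_injective)]
  · congr 1; ext ⟨p, q⟩
    simp only [pivotRow_iff_lt_entryOrTop, coe_lt_entryOrTop_iff,
      mem_range_iff_eq_castLE hc hmatch, mem_ofPred_eq, preimage_ofPred_eq, comp_apply,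
      Prod.map_fst, Prod.fst_swap, Prod.map_snd, Prod.snd_swap, id_eq, Fin.val_castLE,
      entryOrTop_val, Nat.cast_inj, Fin.is_lt, Fin.eta, forall_const]
    exact ⟨fun ⟨_, hqp, hq, hpq, hqd⟩ => ⟨hqp, hq, hpq, hqd⟩,
      fun ⟨hqp, hq, hpq, hqd⟩ => ⟨fun h => hpq.trans (hqd h), hqp, hq, hpq, hqd⟩⟩
  · rintro ⟨r, s⟩ ⟨-, hr, -⟩
    obtain ⟨h, -⟩ := (coe_eq_entryOrTop_iff C').1 hr
    exact ⟨(s, ⟨r, h⟩), rfl⟩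

theorem NcheckF_eq_ncard_entryOrTop (hc : c' ≤ c)
    (hmatch : ∀ (i : Fin c) (j : Fin c'), Croot i = C' j → (i : ℕ) = (j : ℕ)) :
    NcheckF c c' Croot C' =
      {p : Fin c × Fin c | p.1 < p.2 ∧ (Croot p.2 : WithTop ℕ) = entryOrTop C' p.2 ∧
        (Croot p.1 : WithTop ℕ) < entryOrTop C' p.2 ∧
        entryOrTop C' p.2 < entryOrTop C' p.1}.ncard := by
  rw [NcheckF, ← ncard_preimage_of_injective_subset_range
    ((injective_id (α := Fin c)).prodMap (Fin.castLE_injective hc))]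
  · congr 1; ext ⟨p, q⟩
    simp only [pivotRow_iff_lt_entryOrTop, coe_lt_entryOrTop_iff,
      mem_range_iff_eq_castLE hc hmatch, mem_ofPred_eq, preimage_ofPred_eq, Prod.map_fst, id_eq,
      Prod.map_snd, Fin.val_castLE, entryOrTop_val, Nat.cast_inj, Fin.is_lt, Fin.eta, forall_const]
    exact ⟨fun ⟨_, hpq, hq, hpq', hqd⟩ => ⟨hpq, hq, hpq', hqd⟩,
      fun ⟨hpq, hq, hpq', hqd⟩ => ⟨fun h => hpq'.trans (hqd h), hpq, hq, hpq', hqd⟩⟩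
  · rintro ⟨r, s⟩ ⟨-, hs, -⟩
    obtain ⟨h, -⟩ := (coe_eq_entryOrTop_iff C').1 hs
    exact ⟨(r, ⟨s, h⟩), rfl⟩

end RootColumn

/-- Lemma 4.8: `ℓ(Ĉ) = ℓ(Cᵢ) + N̂(i) − Ň(i)` for the root column `Croot` of a
fixed column `Cᵢ = C'`. -/
theorem length_of_root_column (c c' : ℕ) (hcc : c = c' ∨ c = c' + 1)
    (C' : Fin c' → ℕ) (Croot : Fin c → ℕ)
    (hroot : HHL2 c c' Croot C')
    (hmatch : ∀ (i : Fin c) (j : Fin c'), Croot i = C' j → (i : ℕ) = (j : ℕ))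
    (horder : ∀ (i i' : Fin c) (hi : (i : ℕ) < c') (hi' : (i' : ℕ) < c'),
      (∀ j : Fin c', Croot i ≠ C' j) → (∀ j : Fin c', Croot i' ≠ C' j) →
      (Croot i < Croot i' ↔ C' ⟨(i : ℕ), hi⟩ < C' ⟨(i' : ℕ), hi'⟩))
    (hbottom : ∀ i : Fin c, (i : ℕ) = c' →
      ∀ i' : Fin c, (∀ j : Fin c', Croot i' ≠ C' j) → Croot i' ≤ Croot i) :
    (colInvF c Croot : ℤ)
      = (colInvF c' C' : ℤ) + (NhatF c c' Croot C' : ℤ)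
        - (NcheckF c c' Croot C' : ℤ) := by
  obtain ⟨hCroot, hC', -, hle⟩ := hroot
  have hc : c' ≤ c := by omega
  have key := ncard_inversions_add_ncard_eq (fun i => (Croot i : WithTop ℕ))
    (fun i : Fin c => entryOrTop C' i) (WithTop.coe_injective.comp hCroot)
    (injective_entryOrTop hC' (by omega)) (fun i => (coe_le_entryOrTop_iff C').2 (hle i))
    fun r s hrs hr hs => lt_iff_entryOrTop_lt_of_pivotRow (by omega) hmatch horder hbottom hrs
      ((pivotRow_iff_lt_entryOrTop C').2 hr) ((pivotRow_iff_lt_entryOrTop C').2 hs)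
  simp only [Nat.cast_lt] at key
  rw [colInvF, colInvF_eq_ncard_entryOrTop hc, NhatF_eq_ncard_entryOrTop hc hmatch,
    NcheckF_eq_ncard_entryOrTop hc hmatch]
  omega
end

section
/- In a semistandard Young tableau T with n(T) = 0 (strict), consider two adjacent columns and let a be the highest entry of the left column not appearing in the right column ('distinct'). If the entry c directly to the right of a satisfies c < b where b is the entry directly below a in the left column, then c does not appear in the left column (c is a distinct entry of the right column). -/
/-- A semistandard Young tableau presented by columns: `m` columns, column `j`
of length `colLen j` (weakly decreasing in `j`), entries `σ r j`; rows weakly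
increase and columns strictly increase. -/
def IsSSYTcols (m : ℕ) (colLen : ℕ → ℕ) (σ : ℕ → ℕ → ℕ) : Prop :=
  (∀ j, j + 1 < m → colLen (j + 1) ≤ colLen j) ∧
  (∀ j, j + 1 < m → ∀ r < colLen (j + 1), σ r j ≤ σ r (j + 1)) ∧
  (∀ j < m, ∀ r, r + 1 < colLen j → σ r j < σ (r + 1) j)

/-- Length of row `r` of the subtableau of cells with entries `≤ v`. -/
noncomputable def rhoLE (m : ℕ) (colLen : ℕ → ℕ) (σ : ℕ → ℕ → ℕ) (r v : ℕ) : ℕ :=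
  Set.ncard {j : ℕ | j < m ∧ r < colLen j ∧ σ r j ≤ v}

/-- `T` is strict (its Gelfand–Tsetlin pattern has strictly decreasing rows,
equivalently `n(T) = 0`): for every threshold `v`, the row lengths of the
subtableau of entries `≤ v` are strictly decreasing while nonzero. -/
def IsStrictT (m : ℕ) (colLen : ℕ → ℕ) (σ : ℕ → ℕ → ℕ) : Prop :=
  ∀ v r, 0 < rhoLE m colLen σ (r + 1) v →
    rhoLE m colLen σ (r + 1) v < rhoLE m colLen σ r v

theorem MonotoneOn.ne_of_lt_of_lt_nat {α : Type*} [Preorder α] {f : ℕ → α} {s : Set ℕ}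
    (hf : MonotoneOn f s) {n : ℕ} (hn : n ∈ s) (hn' : n + 1 ∈ s) {x : α} (h1 : f n < x)
    (h2 : x < f (n + 1)) {a : ℕ} (ha : a ∈ s) : f a ≠ x := by
  rintro rfl
  exact (hf.reflect_lt hn ha h1).not_ge (Nat.le_of_lt_succ <| hf.reflect_lt ha hn' h2)

theorem IsSSYTcols.strictMonoOn_col {m : ℕ} {colLen : ℕ → ℕ} {σ : ℕ → ℕ → ℕ}
    (hT : IsSSYTcols m colLen σ) {j : ℕ} (hj : j < m) :
    StrictMonoOn (σ · j) (Set.Iio (colLen j)) :=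
  strictMonoOn_of_lt_add_one Set.ordConnected_Iio fun r _ _ hr => hT.2.2 j hj r hr

theorem highest_distinct_right_neighbor_distinct_general (m : ℕ) (colLen : ℕ → ℕ)
    (σ : ℕ → ℕ → ℕ)
    (hssyt : IsSSYTcols m colLen σ)
    (j ra : ℕ) (hj : j + 1 < m)
    (hra : ra < colLen j)
    -- `a` is distinct (does not appear in the right column):
    (hdist : ∀ r' < colLen (j + 1), σ ra j ≠ σ r' (j + 1))
    (hb : ra + 1 < colLen j)        -- the entry `b` below `a` exists
    (hc : ra < colLen (j + 1))      -- the entry `c` to the right of `a` exists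
    (hcb : σ ra (j + 1) < σ (ra + 1) j) :   -- `c < b`
    ∀ r < colLen j, σ r j ≠ σ ra (j + 1) := by
  have hac : σ ra j < σ ra (j + 1) := (hssyt.2.1 j hj ra hc).lt_of_ne (hdist ra hc)
  intro r hr
  exact (hssyt.strictMonoOn_col (by omega)).monotoneOn.ne_of_lt_of_lt_nat hra hb hac hcb hr

/-- Structural step in the proof of Proposition 4.8: in a strict SSYT, consider
adjacent columns `j, j+1` and let `a = σ ra j` be the highest entry of the left
column not appearing in the right column. If the entry `c = σ ra (j+1)`
directly to the right of `a` is strictly smaller than the entry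
`b = σ (ra+1) j` directly below `a`, then `c` does not appear in the left
column. -/
theorem highest_distinct_right_neighbor_distinct (m : ℕ) (colLen : ℕ → ℕ)
    (σ : ℕ → ℕ → ℕ)
    (hssyt : IsSSYTcols m colLen σ) (hstrict : IsStrictT m colLen σ)
    (j ra : ℕ) (hj : j + 1 < m)
    (hra : ra < colLen j)
    -- `a` is distinct (does not appear in the right column):
    (hdist : ∀ r' < colLen (j + 1), σ ra j ≠ σ r' (j + 1))
    -- `a` is the highest such entry:
    (hhighest : ∀ r < ra, ∃ r' < colLen (j + 1), σ r j = σ r' (j + 1))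
    (hb : ra + 1 < colLen j)        -- the entry `b` below `a` exists
    (hc : ra < colLen (j + 1))      -- the entry `c` to the right of `a` exists
    (hcb : σ ra (j + 1) < σ (ra + 1) j) :   -- `c < b`
    ∀ r < colLen j, σ r j ≠ σ ra (j + 1) :=
  highest_distinct_right_neighbor_distinct_general m colLen σ hssyt j ra hj hra hdist hb hc hcb
end
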